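/- arXiv:1207.3237 — 5 statements merged into one kernel-verified Lean document; each statement's English description precedes it below -/
import Mathlib

section
/- Let (p_k)_{k∈ℕ} be nonnegative reals with Σ_{k≥0} p_k = 1, let φ(θ) = Σ_{k≥0} p_k e^{ikθ} be the associated characteristic function, and set γ² = Σ_{k≥0} p_{2k}p_{2k+1}/(p_{2k} + p_{2k+1}), where a summand is 0 when p_{2k} = p_{2k+1} = 0. Then for every θ ∈ [−π, π], |φ(θ)| ≤ exp(−γ²θ²/5). -/
open Complex

/-- The characteristic exponent coefficient `γ²` of a pmf on `ℕ`. -/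
noncomputable def gammaSq (p : ℕ → ℝ) : ℝ :=
  ∑' j : ℕ, p (2 * j) * p (2 * j + 1) / (p (2 * j) + p (2 * j + 1))

/-- Pointwise key inequality: `|a + b e^{iθ}| ≤ (a+b) - (1-cos θ) ab/(a+b)`. -/
lemma key_pointwise (a b θ : ℝ) (ha : 0 ≤ a) (hb : 0 ≤ b) :
    ‖(a : ℂ) + (b : ℂ) * Complex.exp ((θ : ℂ) * Complex.I)‖
      ≤ (a + b) - (1 - Real.cos θ) * (a * b / (a + b)) := by
  rcases eq_or_lt_of_le (by positivity : (0:ℝ) ≤ a + b) with h0 | hpos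
  · have ha0 : a = 0 := by linarith
    have hb0 : b = 0 := by linarith
    simp [ha0, hb0]
  · have hcos := Real.neg_one_le_cos θ
    have hcos' := Real.cos_le_one θ
    have habne : a + b ≠ 0 := ne_of_gt hpos
    have hR : 0 ≤ (a + b) - (1 - Real.cos θ) * (a * b / (a + b)) := by
      rw [sub_nonneg]
      have hab : a * b / (a + b) ≤ (a + b) / 2 := by
        rw [div_le_div_iff₀ hpos (by norm_num)]
        nlinarith [sq_nonneg (a - b)]
      nlinarith
    have hz : (a : ℂ) + (b : ℂ) * Complex.exp ((θ : ℂ) * Complex.I)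
        = Complex.ofReal (a + b * Real.cos θ) + Complex.ofReal (b * Real.sin θ) * Complex.I := by
      rw [Complex.exp_mul_I]
      push_cast
      ring
    have hns : Complex.normSq ((a : ℂ) + (b : ℂ) * Complex.exp ((θ : ℂ) * Complex.I))
        = (a + b * Real.cos θ) ^ 2 + (b * Real.sin θ) ^ 2 := by
      rw [hz, Complex.normSq_add_mul_I]
    have hsc : Real.sin θ ^ 2 = 1 - Real.cos θ ^ 2 := by
      have := Real.sin_sq_add_cos_sq θ; linarith
    have hle : Complex.normSq ((a : ℂ) + (b : ℂ) * Complex.exp ((θ : ℂ) * Complex.I))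
        ≤ ((a + b) - (1 - Real.cos θ) * (a * b / (a + b))) ^ 2 := by
      rw [hns]
      have hexp : ((a + b) - (1 - Real.cos θ) * (a * b / (a + b))) ^ 2
          = (a + b) ^ 2 - 2 * (1 - Real.cos θ) * (a * b)
            + ((1 - Real.cos θ) * (a * b / (a + b))) ^ 2 := by
        field_simp
        ring
      rw [hexp]
      have : (a + b * Real.cos θ) ^ 2 + (b * Real.sin θ) ^ 2
          = (a + b) ^ 2 - 2 * (1 - Real.cos θ) * (a * b) := by
        have : (b * Real.sin θ) ^ 2 = b ^ 2 * (1 - Real.cos θ ^ 2) := by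
          rw [mul_pow, hsc]
        rw [this]; ring
      rw [this]
      nlinarith [sq_nonneg ((1 - Real.cos θ) * (a * b / (a + b)))]
    calc ‖(a : ℂ) + (b : ℂ) * Complex.exp ((θ : ℂ) * Complex.I)‖
        = Real.sqrt (Complex.normSq ((a : ℂ) + (b : ℂ) * Complex.exp ((θ : ℂ) * Complex.I))) := by
          rw [Complex.norm_def]
      _ ≤ Real.sqrt (((a + b) - (1 - Real.cos θ) * (a * b / (a + b))) ^ 2) :=
          Real.sqrt_le_sqrt hle
      _ = (a + b) - (1 - Real.cos θ) * (a * b / (a + b)) := by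
          rw [Real.sqrt_sq hR]

theorem stmt11 (p : ℕ → ℝ) (hp : ∀ k, 0 ≤ p k) (hsum : HasSum p 1) :
    ∀ θ ∈ Set.Icc (-Real.pi) Real.pi,
      ‖∑' k : ℕ, (p k : ℂ) * Complex.exp ((k : ℂ) * θ * Complex.I)‖
        ≤ Real.exp (-(gammaSq p) * θ ^ 2 / 5) := by
  intro θ hθ
  obtain ⟨hθ1, hθ2⟩ := hθ
  set c : ℝ := 1 - Real.cos θ with hc
  -- basic summability facts
  have hpsumm : Summable p := hsum.summable
  have hpe : Summable (fun j => p (2 * j)) :=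
    hpsumm.comp_injective (fun x y h => by omega)
  have hpo : Summable (fun j => p (2 * j + 1)) :=
    hpsumm.comp_injective (fun x y h => by omega)
  set q : ℕ → ℝ := fun j => p (2 * j) + p (2 * j + 1) with hq
  have hqsumm : Summable q := hpe.add hpo
  have hqsum : HasSum q 1 := by
    have h1 : HasSum p ((∑' j, p (2 * j)) + ∑' j, p (2 * j + 1)) :=
      HasSum.even_add_odd hpe.hasSum hpo.hasSum
    have h2 : (∑' j, p (2 * j)) + (∑' j, p (2 * j + 1)) = 1 := hsum.unique h1 |>.symm
    rw [← h2]
    exact hpe.hasSum.add hpo.hasSum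
  set g : ℕ → ℝ := fun j => p (2 * j) * p (2 * j + 1) / (p (2 * j) + p (2 * j + 1)) with hgdef
  have hg0 : ∀ j, 0 ≤ g j := fun j => by
    have := hp (2 * j); have := hp (2 * j + 1); positivity
  have hgq : ∀ j, g j ≤ q j := by
    intro j
    have ha := hp (2 * j); have hb := hp (2 * j + 1)
    rcases eq_or_lt_of_le (by positivity : (0:ℝ) ≤ p (2*j) + p (2*j+1)) with h0 | hpos
    · have ha0 : p (2 * j) = 0 := by linarith
      have hb0 : p (2 * j + 1) = 0 := by linarith
      simp [hgdef, hq, ha0, hb0]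
    · simp only [hgdef, hq]
      rw [div_le_iff₀ hpos]
      nlinarith
  have hgsumm : Summable g := by
    exact Summable.of_nonneg_of_le hg0 hgq hqsumm
  -- the complex series
  set f : ℕ → ℂ := fun k => (p k : ℂ) * Complex.exp ((k : ℂ) * θ * Complex.I) with hf
  have hnormf : ∀ k, ‖f k‖ = p k := by
    intro k
    simp only [hf]
    rw [norm_mul, Complex.norm_exp]
    have : (((k : ℂ) * θ * Complex.I)).re = 0 := by
      simp [Complex.mul_re, Complex.mul_im]
    rw [this, Real.exp_zero, mul_one, Complex.norm_real, Real.norm_eq_abs, _root_.abs_of_nonneg (hp k)]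
  have hfsumm : Summable f := by
    apply Summable.of_norm
    simpa only [hnormf] using hpsumm
  have hfe : Summable (fun j => f (2 * j)) :=
    hfsumm.comp_injective (fun x y h => by omega)
  have hfo : Summable (fun j => f (2 * j + 1)) :=
    hfsumm.comp_injective (fun x y h => by omega)
  set F : ℕ → ℂ := fun j => f (2 * j) + f (2 * j + 1) with hF
  have hFsumm : Summable F := hfe.add hfo
  have htsumf : ∑' k, f k = ∑' j, F j := by
    have h1 : HasSum f ((∑' j, f (2 * j)) + ∑' j, f (2 * j + 1)) :=
      HasSum.even_add_odd hfe.hasSum hfo.hasSum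
    rw [h1.tsum_eq, hF]
    exact (Summable.tsum_add hfe hfo).symm
  -- pointwise bound on |F j|
  have hFbound : ∀ j, ‖F j‖ ≤ q j - c * g j := by
    intro j
    have hsplit : F j = Complex.exp (((2 * j : ℕ) : ℂ) * θ * Complex.I) *
        ((p (2 * j) : ℂ) + (p (2 * j + 1) : ℂ) * Complex.exp ((θ : ℂ) * Complex.I)) := by
      have e1 : ((2 * j + 1 : ℕ) : ℂ) * θ * Complex.I
          = ((2 * j : ℕ) : ℂ) * θ * Complex.I + (θ : ℂ) * Complex.I := by push_cast; ring
      simp only [hF, hf, e1, Complex.exp_add]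
      push_cast
      ring
    rw [hsplit, norm_mul, Complex.norm_exp]
    have : ((((2 * j : ℕ) : ℂ)) * θ * Complex.I).re = 0 := by
      simp [Complex.mul_re, Complex.mul_im]
    rw [this, Real.exp_zero, one_mul]
    have := key_pointwise (p (2 * j)) (p (2 * j + 1)) θ (hp _) (hp _)
    simpa [hq, hgdef, hc, mul_comm] using this
  -- sum the bounds
  have hnormFsumm : Summable (fun j => ‖F j‖) := by
    apply Summable.of_nonneg_of_le (fun j => norm_nonneg _)
      (fun j => (hFbound j).trans ?_) hqsumm
    have := hg0 j
    have hcnn : 0 ≤ c := by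
      simp only [hc, sub_nonneg]; exact Real.cos_le_one θ
    nlinarith
  have hFnorm_eq : (fun j => ‖F j‖) = fun j => ‖F j‖ :=
    funext fun j => rfl
  have habs : ‖∑' j, F j‖ ≤ ∑' j, ‖F j‖ := by
    have h : Summable (fun j => ‖F j‖) := hFnorm_eq ▸ hnormFsumm
    have h2 := norm_tsum_le_tsum_norm h
    exact h2
  have hsum2 : ∑' j, ‖F j‖ ≤ ∑' j, (q j - c * g j) := by
    apply Summable.tsum_le_tsum hFbound hnormFsumm
    exact hqsumm.sub (hgsumm.mul_left c)
  have hval : ∑' j, (q j - c * g j) = 1 - c * gammaSq p := by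
    rw [Summable.tsum_sub hqsumm (hgsumm.mul_left c), hqsum.tsum_eq, tsum_mul_left]
    rfl
  have hcnn : 0 ≤ c := by
    simp only [hc, sub_nonneg]; exact Real.cos_le_one θ
  have hgamma_nn : 0 ≤ gammaSq p := tsum_nonneg hg0
  -- Jordan-type bound: c ≥ θ²/5
  have hclow : θ ^ 2 / 5 ≤ c := by
    have hj : Real.cos θ ≤ 1 - 2 / Real.pi ^ 2 * θ ^ 2 :=
      Real.cos_le_one_sub_mul_cos_sq (abs_le.mpr ⟨hθ1, hθ2⟩)
    have hpi : Real.pi < 3.15 := Real.pi_lt_d2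
    have hpipos : 0 < Real.pi := Real.pi_pos
    have h2 : θ ^ 2 / 5 ≤ 2 / Real.pi ^ 2 * θ ^ 2 := by
      have hsq : Real.pi ^ 2 < 10 := by nlinarith
      have h5 : (1:ℝ)/5 ≤ 2 / Real.pi ^ 2 := by
        rw [div_le_div_iff₀ (by norm_num) (by positivity)]
        nlinarith
      calc θ ^ 2 / 5 = (1/5) * θ ^ 2 := by ring
        _ ≤ 2 / Real.pi ^ 2 * θ ^ 2 := mul_le_mul_of_nonneg_right h5 (sq_nonneg θ)
    simp only [hc]
    linarith
  -- conclude
  calc ‖∑' k, f k‖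
      = ‖∑' j, F j‖ := by rw [htsumf]
    _ ≤ ∑' j, ‖F j‖ := habs
    _ ≤ ∑' j, (q j - c * g j) := hsum2
    _ = 1 - c * gammaSq p := hval
    _ ≤ Real.exp (-(c * gammaSq p)) := by
        have := Real.add_one_le_exp (-(c * gammaSq p))
        linarith
    _ ≤ Real.exp (-(gammaSq p) * θ ^ 2 / 5) := by
        apply Real.exp_le_exp.mpr
        have : gammaSq p * (θ ^ 2 / 5) ≤ gammaSq p * c :=
          mul_le_mul_of_nonneg_left hclow hgamma_nn
        ring_nf
        nlinarith
end

section
/- Let (p_k)_{k∈ℕ} be nonnegative reals with Σ_{k≥0} p_k = 1 and set γ² = Σ_{k≥0} p_{2k}p_{2k+1}/(p_{2k} + p_{2k+1}), where a summand is 0 when p_{2k} = p_{2k+1} = 0. Then γ² ≤ 1/4; moreover, if X is an ℕ-valued random variable with P(X = k) = p_k and finite second moment, then γ² ≤ Var X. -/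
open MeasureTheory ProbabilityTheory

lemma keylem (p q x : ℝ) (hp : 0 ≤ p) (hq : 0 ≤ q) :
    p * q / (p + q) ≤ p * x ^ 2 + q * (1 - x) ^ 2 := by
  rcases eq_or_lt_of_le (add_nonneg hp hq) with h | h
  · have hp0 : p = 0 := by nlinarith
    have hq0 : q = 0 := by nlinarith
    simp [hp0, hq0]
  · rw [div_le_iff₀ h]
    nlinarith [sq_nonneg (p * x - q * (1 - x)), mul_nonneg hp hq, sq_nonneg x, sq_nonneg (1 - x)]

lemma gammaSq_le_tsum_pairs (p f : ℕ → ℝ) (hp : ∀ k, 0 ≤ p k) (hf : Summable f)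
    (hle : ∀ j : ℕ, p (2 * j) * p (2 * j + 1) / (p (2 * j) + p (2 * j + 1))
      ≤ f (2 * j) + f (2 * j + 1)) :
    gammaSq p ≤ ∑' n, f n := by
  have hfe : Summable fun j => f (2 * j) :=
    hf.comp_injective (fun a b h => by omega)
  have hfo : Summable fun j => f (2 * j + 1) :=
    hf.comp_injective (fun a b h => by omega)
  have hsplit : ∑' n, f n = ∑' j, (f (2 * j) + f (2 * j + 1)) := by
    rw [← tsum_even_add_odd hfe hfo, Summable.tsum_add hfe hfo]
  rw [hsplit, gammaSq]
  refine Summable.tsum_le_tsum hle ?_ (hfe.add hfo)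
  refine Summable.of_nonneg_of_le (fun j => ?_) hle (hfe.add hfo)
  exact div_nonneg (mul_nonneg (hp _) (hp _)) (add_nonneg (hp _) (hp _))

theorem stmt12 (p : ℕ → ℝ) (hp : ∀ k, 0 ≤ p k) (hsum : HasSum p 1) :
    gammaSq p ≤ 1 / 4 ∧
    ∀ (Ω : Type) (mΩ : MeasurableSpace Ω) (μ : Measure Ω), IsProbabilityMeasure μ →
      ∀ X : Ω → ℕ, Measurable X →
        (∀ k, (μ {ω | X ω = k}).toReal = p k) →
        Integrable (fun ω => (X ω : ℝ)) μ →
        Integrable (fun ω => (X ω : ℝ) ^ 2) μ →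
        gammaSq p ≤ ∫ ω, ((X ω : ℝ) - ∫ ω', (X ω' : ℝ) ∂μ) ^ 2 ∂μ := by
  constructor
  · -- γ² ≤ 1/4
    have h : gammaSq p ≤ ∑' n, p n / 4 := by
      refine gammaSq_le_tsum_pairs p (fun n => p n / 4) hp (hsum.summable.div_const 4)
        (fun j => ?_)
      have := keylem (p (2 * j)) (p (2 * j + 1)) (1 / 2) (hp _) (hp _)
      calc p (2 * j) * p (2 * j + 1) / (p (2 * j) + p (2 * j + 1))
          ≤ p (2 * j) * (1/2 : ℝ) ^ 2 + p (2 * j + 1) * (1 - 1/2) ^ 2 := this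
        _ = p (2 * j) / 4 + p (2 * j + 1) / 4 := by ring
    have h2 : ∑' n, p n / 4 = 1 / 4 := by
      rw [tsum_div_const, hsum.tsum_eq]
    linarith
  · intro Ω mΩ μ hμ X hX hpX hX1 hX2
    set m := ∫ ω', (X ω' : ℝ) ∂μ with hm
    set g : ℕ → ℝ := fun n => ((n : ℝ) - m) ^ 2 with hg
    have hgnn : ∀ n, 0 ≤ g n := fun n => sq_nonneg _
    have hgm : Measurable g := by measurability
    have hfun : (fun ω => ((X ω : ℝ) - m) ^ 2)
        = fun ω => ((X ω : ℝ) ^ 2 - (2 * m) * (X ω : ℝ)) + m ^ 2 := by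
      funext ω; ring
    have hint : Integrable (fun ω => ((X ω : ℝ) - m) ^ 2) μ := by
      rw [hfun]
      exact (hX2.sub (hX1.const_mul (2 * m))).add (integrable_const _)
    set ν := μ.map X with hν
    have hνprob : IsProbabilityMeasure ν := Measure.isProbabilityMeasure_map hX.aemeasurable
    have hintν : Integrable g ν := by
      rw [hν, integrable_map_measure hgm.aestronglyMeasurable hX.aemeasurable]
      exact hint
    have hνn : ∀ n : ℕ, (ν {n}).toReal = p n := by
      intro n
      rw [hν, Measure.map_apply hX (measurableSet_singleton n)]
      exact hpX n
    have hνr : ∀ n : ℕ, ν {n} = ENNReal.ofReal (p n) := by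
      intro n
      rw [← hνn n, ENNReal.ofReal_toReal (measure_ne_top ν _)]
    have hIeq : ∫ ω, ((X ω : ℝ) - m) ^ 2 ∂μ = ∑' n, p n * g n := by
      have h1 : ∫ ω, ((X ω : ℝ) - m) ^ 2 ∂μ = ∫ n, g n ∂ν :=
        (integral_map hX.aemeasurable hgm.aestronglyMeasurable).symm
      rw [h1, integral_countable' hintν]
      exact tsum_congr fun n => by rw [smul_eq_mul, measureReal_def, hνn n]
    rw [hIeq]
    -- summability of n ↦ p n * g n
    have hofReal : (fun n => ENNReal.ofReal (g n)) = fun n => (‖g n‖₊ : ENNReal) := by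
      funext n
      rw [← enorm_eq_nnnorm, ← ofReal_norm, Real.norm_of_nonneg (hgnn n)]
    have hsummable : Summable fun n => p n * g n := by
      have hfin : ∑' n : ℕ, ENNReal.ofReal (p n * g n) ≠ ⊤ := by
        have hcalc : ∑' n : ℕ, ENNReal.ofReal (p n * g n)
            = ∫⁻ n, ENNReal.ofReal (g n) ∂ν := by
          rw [lintegral_countable' (fun n => ENNReal.ofReal (g n))]
          refine tsum_congr fun n => ?_
          rw [ENNReal.ofReal_mul (hp n), ← hνr n, mul_comm]
        rw [hcalc, hofReal]
        exact hintν.2.ne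
      have := ENNReal.summable_toReal hfin
      refine this.congr fun n => ?_
      rw [ENNReal.toReal_ofReal (mul_nonneg (hp n) (hgnn n))]
    refine gammaSq_le_tsum_pairs p (fun n => p n * g n) hp hsummable (fun j => ?_)
    have hkey := keylem (p (2 * j)) (p (2 * j + 1)) (m - 2 * j) (hp _) (hp _)
    calc p (2 * j) * p (2 * j + 1) / (p (2 * j) + p (2 * j + 1))
        ≤ p (2 * j) * (m - 2 * j) ^ 2 + p (2 * j + 1) * (1 - (m - 2 * j)) ^ 2 := hkey
      _ = p (2 * j) * g (2 * j) + p (2 * j + 1) * g (2 * j + 1) := by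
          simp only [hg]
          push_cast
          ring
end

section
/- Let 0 < r ≤ 1 and let X_1, …, X_n be independent ℕ-valued random variables with means m_k, standard deviations σ_k and finite (2+r)-th centered moments. Set σ² = Σ_k Var X_k, β = Σ_k E|X_k − m_k|^{2+r}, δ = (σ²/(2β))^{1/r}, and let φ_k(θ) = E[e^{iθ(X_k − m_k)}]. If σ > 0 and max_k σ_k ≤ σ/2, then for every θ with |θ| ≤ δ, |Π_{k=1}^n φ_k(θ) − exp(−σ²θ²/2)| ≤ β·|θ|^{2+r}·exp(−σ²θ²/8). -/
open MeasureTheory ProbabilityTheory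

set_option maxHeartbeats 1000000

/-- Mean of an `ℕ`-valued random variable. -/
noncomputable def meanOf {Ω : Type*} [MeasurableSpace Ω] (μ : Measure Ω) (X : Ω → ℕ) : ℝ :=
  ∫ ω, (X ω : ℝ) ∂μ

/-- Centered absolute moment of order `p` of an `ℕ`-valued random variable. -/
noncomputable def cmom {Ω : Type*} [MeasurableSpace Ω] (μ : Measure Ω) (X : Ω → ℕ)
    (p : ℝ) : ℝ :=
  ∫ ω, |(X ω : ℝ) - meanOf μ X| ^ p ∂μ

namespace Stmt14Aux

open Real

lemma mono_aux {f f' : ℝ → ℝ} (hd : ∀ t, HasDerivAt f (f' t) t)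
    (h0 : ∀ t, 0 ≤ t → 0 ≤ f' t) {x : ℝ} (hx : 0 ≤ x) : f 0 ≤ f x := by
  have hdiff : Differentiable ℝ f := fun t => (hd t).differentiableAt
  have hmono : MonotoneOn f (Set.Ici (0:ℝ)) := by
    apply monotoneOn_of_deriv_nonneg (convex_Ici 0) hdiff.continuous.continuousOn
      hdiff.differentiableOn
    intro t ht
    rw [(hd t).deriv]
    exact h0 t (le_of_lt (by simpa using ht))
  exact hmono (by simp) (by simpa using hx) hx

lemma sin_lower {x : ℝ} (hx : 0 ≤ x) : x - x^3/6 ≤ Real.sin x := by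
  have hd : ∀ t : ℝ, HasDerivAt (fun t => Real.sin t - t + t^3/6)
      (Real.cos t - 1 + t^2/2) t := by
    intro t
    have h1 := (Real.hasDerivAt_sin t).sub (hasDerivAt_id t)
    have h2 := (hasDerivAt_pow 3 t).div_const 6
    have := h1.add h2
    exact this.congr_deriv (by ring)
  have := mono_aux hd (fun t ht => by nlinarith [Real.one_sub_sq_div_two_le_cos (x := t)]) hx
  simp at this
  linarith

lemma cos_upper4 {x : ℝ} (hx : 0 ≤ x) : Real.cos x ≤ 1 - x^2/2 + x^4/24 := by
  have hd : ∀ t : ℝ, HasDerivAt (fun t => 1 - t^2/2 + t^4/24 - Real.cos t)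
      (-t + t^3/6 + Real.sin t) t := by
    intro t
    have h1 : HasDerivAt (fun t : ℝ => 1 - t^2/2 + t^4/24) (-t + t^3/6) t := by
      have h2 := ((hasDerivAt_pow 2 t).div_const 2)
      have h3 := ((hasDerivAt_pow 4 t).div_const 24)
      have := ((hasDerivAt_const t (1:ℝ)).sub h2).add h3
      exact this.congr_deriv (by ring)
    have := h1.sub (Real.hasDerivAt_cos t)
    exact this.congr_deriv (by ring)
  have := mono_aux hd (fun t ht => by nlinarith [sin_lower ht]) hx
  simp at this
  linarith

lemma exp_neg_upper {a : ℝ} (ha : 0 ≤ a) : Real.exp (-a) ≤ 1 - a + a^2/2 := by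
  have hd : ∀ t : ℝ, HasDerivAt (fun t => 1 - t + t^2/2 - Real.exp (-t))
      (-1 + t + Real.exp (-t)) t := by
    intro t
    have h2 := ((hasDerivAt_pow 2 t).div_const 2)
    have h3 : HasDerivAt (fun t : ℝ => Real.exp (-t)) (-Real.exp (-t)) t := by
      exact ((Real.hasDerivAt_exp (-t)).comp t (hasDerivAt_neg t)).congr_deriv (by simp)
    have := (((hasDerivAt_const t (1:ℝ)).sub (hasDerivAt_id t)).add h2).sub h3
    exact this.congr_deriv (by ring)
  have := mono_aux hd (fun t ht => by nlinarith [Real.add_one_le_exp (-t)]) ha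
  simp at this
  linarith

lemma exp_neg_lower3 {a : ℝ} (ha : 0 ≤ a) : 1 - a + a^2/2 - a^3/6 ≤ Real.exp (-a) := by
  have hd : ∀ t : ℝ, HasDerivAt (fun t => Real.exp (-t) - (1 - t + t^2/2 - t^3/6))
      (-Real.exp (-t) - (-1 + t - t^2/2)) t := by
    intro t
    have h3 : HasDerivAt (fun t : ℝ => Real.exp (-t)) (-Real.exp (-t)) t := by
      exact ((Real.hasDerivAt_exp (-t)).comp t (hasDerivAt_neg t)).congr_deriv (by simp)
    have h2 := ((hasDerivAt_pow 2 t).div_const 2)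
    have h4 := ((hasDerivAt_pow 3 t).div_const 6)
    have := h3.sub ((((hasDerivAt_const t (1:ℝ)).sub (hasDerivAt_id t)).add h2).sub h4)
    exact this.congr_deriv (by ring)
  have := mono_aux hd (fun t ht => by nlinarith [exp_neg_upper ht]) ha
  simp at this
  linarith

lemma rpow_two' (x : ℝ) : x ^ (2:ℝ) = x ^ 2 := by
  rw [show (2:ℝ) = ((2:ℕ):ℝ) by norm_num, Real.rpow_natCast]

/-- The centered second-order Taylor bound on `e^{ix}` with exponent `2+r`. -/
lemma claimB {r : ℝ} (hr0 : 0 < r) (hr1 : r ≤ 1) (x : ℝ) :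
    ‖(Complex.exp (x * Complex.I) - 1 - x * Complex.I + x ^ 2 / 2)‖
      ≤ 3/5 * |x| ^ (2 + r) := by
  suffices h : ∀ y : ℝ, 0 ≤ y →
      ‖(Complex.exp (y * Complex.I) - 1 - y * Complex.I + y ^ 2 / 2)‖
        ≤ 3/5 * |y| ^ (2 + r) by
    rcases le_or_gt 0 x with hx | hx
    · exact h x hx
    · have hconj : Complex.exp ((-x : ℝ) * Complex.I) - 1 - (-x : ℝ) * Complex.I
          + (-x:ℝ) ^ 2 / 2
          = (starRingEnd ℂ) (Complex.exp (x * Complex.I) - 1 - x * Complex.I + x ^ 2 / 2) := by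
        rw [map_add, map_sub, map_sub, ← Complex.exp_conj]
        push_cast
        simp [map_ofNat]
      have := h (-x) (by linarith)
      rw [hconj, Complex.norm_conj, abs_neg] at this
      exact this
  intro x hx
  rcases eq_or_lt_of_le hx with hx0 | hx0
  · simp only [← hx0]
    norm_num
    positivity
  set z := Complex.exp (x * Complex.I) - 1 - x * Complex.I + x ^ 2 / 2 with hz
  have hre : z.re = Real.cos x - 1 + x ^ 2 / 2 := by
    simp [hz, Complex.exp_ofReal_mul_I_re]
    norm_cast
  have him : z.im = Real.sin x - x := by
    simp [hz, Complex.exp_ofReal_mul_I_im]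
    norm_cast
  have hre0 : 0 ≤ z.re := by
    rw [hre]; have := Real.one_sub_sq_div_two_le_cos (x := x); linarith
  have habs : |x| = x := abs_of_nonneg hx
  rw [habs]
  have hre2 : z.re ≤ x ^ 2 / 2 := by rw [hre]; have := Real.cos_le_one x; linarith
  have him0 : z.im ≤ 0 := by rw [him]; have := Real.sin_le hx; linarith
  have hsq : ‖z‖ ^ 2 = z.re ^ 2 + z.im ^ 2 := by
    rw [Complex.sq_norm, Complex.normSq_apply]; ring
  have habs_le : ∀ B : ℝ, 0 ≤ B → z.re ^ 2 + z.im ^ 2 ≤ B ^ 2 → ‖z‖ ≤ B := by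
    intro B hB h
    nlinarith [norm_nonneg z, hsq]
  have hx2 : x ^ (2:ℝ) ≤ x ^ (2 + r) → 3/5 * (x^2) ≤ 3/5 * x ^ (2+r) := by
    rw [rpow_two']; intro h; linarith
  rcases le_or_gt x 2.2 with hc2 | hc2
  · have h1 : ‖z‖ ≤ |z.re| + |z.im| := Complex.norm_le_abs_re_add_abs_im z
    have h2 : |z.re| ≤ x^4/24 := by
      rw [abs_of_nonneg hre0, hre]
      have := cos_upper4 hx
      linarith
    have h3 : |z.im| ≤ x^3/6 := by
      rw [abs_of_nonpos him0, him]
      have := sin_lower hx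
      linarith
    rcases le_or_gt x 1 with hc1 | hc1
    · have hx4 : x^4 ≤ x^3 := by nlinarith [pow_nonneg hx 3]
      have h4 : ‖z‖ ≤ 5/24 * x^3 := by nlinarith
      have h5 : x ^ (3:ℝ) ≤ x ^ (2+r) :=
        Real.rpow_le_rpow_of_exponent_ge hx0 hc1 (by linarith)
      have h6 : x ^ (3:ℝ) = x ^ 3 := by
        rw [show (3:ℝ) = ((3:ℕ):ℝ) by norm_num, Real.rpow_natCast]
      rw [h6] at h5
      nlinarith
    · have hxa : x^2 + 4*x ≤ 14.4 := by nlinarith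
      have hxb : x^4/24 + x^3/6 ≤ 3/5 * x^2 := by nlinarith [sq_nonneg x]
      have h4 : ‖z‖ ≤ 3/5 * x^2 := by linarith
      have h5 : x ^ (2:ℝ) ≤ x ^ (2+r) :=
        Real.rpow_le_rpow_of_exponent_le (by linarith) (by linarith)
      exact h4.trans (hx2 h5)
  · have h5 : x ^ (2:ℝ) ≤ x ^ (2 + r) :=
      Real.rpow_le_rpow_of_exponent_le (by linarith) (by linarith)
    have main : ‖z‖ ≤ 3/5 * x^2 := by
      apply habs_le _ (by nlinarith)
      have hpi_lt : (π:ℝ) < 3.141593 := Real.pi_lt_d6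
      have hpi_gt : (3.141592:ℝ) < π := Real.pi_gt_d6
      rcases le_or_gt x π with hc3 | hc3
      · have hcos : Real.cos x ≤ -(0.55) := by
          have h7 : Real.cos (π - x) = -Real.cos x := Real.cos_pi_sub x
          have h8 : 1 - (π - x)^2/2 ≤ Real.cos (π - x) := Real.one_sub_sq_div_two_le_cos
          nlinarith
        have hrehi : z.re ≤ x^2/2 - 1.55 := by rw [hre]; linarith
        have himlo : -x ≤ z.im := by
          rw [him]
          have := Real.sin_nonneg_of_nonneg_of_le_pi hx hc3
          linarith
        have hq1 : z.re^2 ≤ (x^2/2 - 1.55)^2 := by nlinarith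
        have hq2 : z.im^2 ≤ x^2 := by nlinarith
        nlinarith [hq1, hq2, sq_nonneg x]
      · rcases le_or_gt x 3.9 with hc4 | hc4
        · have hy : x = (x - π) + π := by ring
          have hcos : Real.cos x ≤ -(0.71) := by
            have h7 : Real.cos ((x - π) + π) = -Real.cos (x - π) := Real.cos_add_pi _
            have h8 : 1 - (x - π)^2/2 ≤ Real.cos (x - π) := Real.one_sub_sq_div_two_le_cos
            rw [← hy] at h7
            nlinarith
          have hsin : -(0.76) ≤ Real.sin x := by
            have h7 : Real.sin ((x - π) + π) = -Real.sin (x - π) := Real.sin_add_pi _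
            have h8 : Real.sin (x - π) ≤ x - π := Real.sin_le (by linarith)
            rw [← hy] at h7
            nlinarith
          have hrehi : z.re ≤ x^2/2 - 1.71 := by rw [hre]; linarith
          have himlo : -(x + 0.76) ≤ z.im := by rw [him]; linarith
          have hq1 : z.re^2 ≤ (x^2/2 - 1.71)^2 := by nlinarith
          have hq2 : z.im^2 ≤ (x + 0.76)^2 := by nlinarith
          have hx31 : 3.141592 ≤ x := by linarith
          nlinarith [hq1, hq2, sq_nonneg x]
        · have himlo : -(x+1) ≤ z.im := by
            rw [him]
            have := Real.neg_one_le_sin x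
            linarith
          have hq1 : z.re^2 ≤ (x^2/2)^2 := by nlinarith
          have hq2 : z.im^2 ≤ (x + 1)^2 := by nlinarith
          nlinarith [hq1, hq2, sq_nonneg (x - 3.9), sq_nonneg x]
    exact main.trans (hx2 h5)

lemma Mbound {r a e A : ℝ} (hr0 : 0 < r) (hr1 : r ≤ 1) (ha : 0 ≤ a) (he : 0 ≤ e)
    (hL : (2*a) ^ (((2+r)/2 : ℝ)) ≤ e) (hA1 : A ≤ 1) (hAa : A ≤ |1 - a| + 3/5 * e) :
    A ≤ Real.exp (-a + 3/5 * e) := by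
  rcases le_or_gt a 1 with h | h
  · rw [abs_of_nonneg (by linarith)] at hAa
    have := Real.add_one_le_exp (-a + 3/5*e)
    linarith
  · have h2a : (2*a) ≤ (2*a)^(((2+r)/2:ℝ)) := by
      have h1 : (2*a)^((1:ℝ)) ≤ (2*a)^(((2+r)/2:ℝ)) :=
        Real.rpow_le_rpow_of_exponent_le (by linarith) (by linarith)
      simpa using h1
    have : (0:ℝ) ≤ -a + 3/5*e := by linarith
    exact hA1.trans (Real.one_le_exp this)

lemma sq_div_bound {r a e : ℝ} (hr0 : 0 < r) (hr1 : r ≤ 1) (ha : 0 ≤ a) (he : 0 ≤ e)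
    (hL : (2*a) ^ (((2+r)/2 : ℝ)) ≤ e) :
    a^2/2 ≤ e * max 1 (2*a) / 8 := by
  rcases eq_or_lt_of_le ha with h0 | h0
  · simp only [← h0]
    norm_num
    positivity
  have h2a : (0:ℝ) < 2*a := by linarith
  have hsplit : ((2*a):ℝ)^((2:ℝ)) = (2*a)^(((2+r)/2:ℝ)) * (2*a)^(((2-r)/2:ℝ)) := by
    rw [← Real.rpow_add h2a]
    rw [show ((2+r)/2 + (2-r)/2 : ℝ) = 2 by ring]
  have hmax : (2*a)^(((2-r)/2:ℝ)) ≤ max 1 (2*a) := by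
    rcases le_or_gt (2*a) 1 with h | h
    · exact (Real.rpow_le_one (by linarith) h (by linarith)).trans (le_max_left _ _)
    · have : (2*a)^(((2-r)/2:ℝ)) ≤ (2*a)^((1:ℝ)) :=
        Real.rpow_le_rpow_of_exponent_le (by linarith) (by linarith)
      simpa using this.trans (le_max_right _ _)
  have h2 : ((2*a):ℝ)^((2:ℝ)) = (2*a)^2 := by
    rw [show (2:ℝ) = ((2:ℕ):ℝ) by norm_num, Real.rpow_natCast]
  have hrp : (0:ℝ) ≤ (2*a)^(((2-r)/2:ℝ)) := Real.rpow_nonneg (by linarith) _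
  have key : (2*a)^2 ≤ e * max 1 (2*a) := by
    rw [← h2, hsplit]
    apply mul_le_mul hL hmax hrp he
  nlinarith

lemma Dbound {r a e A D : ℝ} (hr0 : 0 < r) (hr1 : r ≤ 1) (ha : 0 ≤ a) (he : 0 ≤ e)
    (hL : (2*a) ^ (((2+r)/2 : ℝ)) ≤ e)
    (hA1 : A ≤ 1)
    (hD1 : D ≤ 3/5*e + (Real.exp (-a) - (1 - a)))
    (hD2 : D ≤ A + Real.exp (-a)) :
    D ≤ e * Real.exp (-(2/5)*a + 3/5*e) := by
  have hexp_nonneg : (0:ℝ) < Real.exp (-(2/5)*a + 3/5*e) := Real.exp_pos _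
  rcases le_or_gt a 0.65 with h | h
  · have hq : Real.exp (-a) - (1 - a) ≤ a^2/2 := by
      have := exp_neg_upper ha; linarith
    have hsq := sq_div_bound hr0 hr1 ha he hL
    have hDs : D ≤ e * (3/5 + max 1 (2*a)/8) := by
      have h8 : (0:ℝ) ≤ max 1 (2*a) := le_max_of_le_left zero_le_one
      nlinarith [hsq, hq, hD1]
    have hkey : 3/5 + max 1 (2*a)/8 ≤ Real.exp (-(2/5)*a) := by
      rcases le_or_gt (2*a) 1 with hm | hm
      · rw [max_eq_left hm]
        have hlow : 1 - (2/5)*a ≤ Real.exp (-(2/5)*a) := by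
          have := Real.add_one_le_exp (-(2/5)*a); linarith
        nlinarith
      · rw [max_eq_right hm.le]
        have hlow := exp_neg_lower3 (show (0:ℝ) ≤ (2/5)*a by linarith)
        have hneg : -((2/5)*a) = -(2/5)*a := by ring
        rw [hneg] at hlow
        nlinarith
    have hmono : Real.exp (-(2/5)*a) ≤ Real.exp (-(2/5)*a + 3/5*e) := by
      apply Real.exp_le_exp.2; linarith
    calc D ≤ e * (3/5 + max 1 (2*a)/8) := hDs
      _ ≤ e * Real.exp (-(2/5)*a) := by
          apply mul_le_mul_of_nonneg_left hkey he
      _ ≤ e * Real.exp (-(2/5)*a + 3/5*e) := mul_le_mul_of_nonneg_left hmono he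
  · have h2a : (2*a) ≤ (2*a)^(((2+r)/2:ℝ)) := by
      have h1 : (2*a)^((1:ℝ)) ≤ (2*a)^(((2+r)/2:ℝ)) :=
        Real.rpow_le_rpow_of_exponent_le (by linarith) (by linarith)
      simpa using h1
    have he2a : 2*a ≤ e := h2a.trans hL
    have hDlt : D ≤ 1 + Real.exp (-(0.65:ℝ)) := by
      have : Real.exp (-a) ≤ Real.exp (-(0.65:ℝ)) := Real.exp_le_exp.2 (by linarith)
      linarith
    have hexp65 : Real.exp (-(0.65:ℝ)) ≤ 0.61 := by
      have h1 : (1.65:ℝ) ≤ Real.exp 0.65 := by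
        have := Real.add_one_le_exp (0.65:ℝ); linarith
      have h2 : Real.exp (-(0.65:ℝ)) = 1 / Real.exp 0.65 := by
        rw [Real.exp_neg]; ring
      rw [h2]
      rw [div_le_iff₀ (by positivity)]
      nlinarith
    have hrhs : (2*a) * Real.exp ((4/5)*a) ≤ e * Real.exp (-(2/5)*a + 3/5*e) := by
      apply mul_le_mul he2a (Real.exp_le_exp.2 (by nlinarith)) (Real.exp_pos _).le (by linarith)
    have hexp52 : (1.52:ℝ) ≤ Real.exp ((4/5)*a) := by
      have := Real.add_one_le_exp ((4/5)*a)
      linarith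
    have hfin : (1.3:ℝ)*1.52 ≤ 2*a*Real.exp ((4/5)*a) := by
      nlinarith [hexp52, Real.exp_pos ((4/5)*a)]
    linarith

lemma prod_sub_prod_bound {ι : Type*} [DecidableEq ι] (s : Finset ι) (f g : ι → ℂ) (M : ι → ℝ)
    (hM : ∀ i, 0 ≤ M i) (hf : ∀ i, ‖(f i)‖ ≤ M i)
    (hg : ∀ i, ‖(g i)‖ ≤ M i) :
    ‖(∏ i ∈ s, f i - ∏ i ∈ s, g i)‖
      ≤ ∑ i ∈ s, ‖(f i - g i)‖ * ∏ j ∈ s.erase i, M j := by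
  induction s using Finset.induction_on with
  | empty => simp
  | @insert a t ha ih =>
    have hprodg : ‖(∏ i ∈ t, g i)‖ ≤ ∏ i ∈ t, M i := by
      rw [norm_prod]
      exact Finset.prod_le_prod (fun i _ => (norm_nonneg _)) (fun i _ => hg i)
    have key : ∏ i ∈ insert a t, f i - ∏ i ∈ insert a t, g i
        = f a * (∏ i ∈ t, f i - ∏ i ∈ t, g i) + (f a - g a) * ∏ i ∈ t, g i := by
      rw [Finset.prod_insert ha, Finset.prod_insert ha]; ring
    rw [key]
    refine (norm_add_le _ _).trans ?_
    rw [norm_mul, norm_mul]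
    have h1 : ‖(f a)‖ * ‖(∏ i ∈ t, f i - ∏ i ∈ t, g i)‖
        ≤ M a * ∑ i ∈ t, ‖(f i - g i)‖ * ∏ j ∈ t.erase i, M j := by
      apply mul_le_mul (hf a) ih (norm_nonneg _) (hM a)
    have h2 : ‖(f a - g a)‖ * ‖(∏ i ∈ t, g i)‖
        ≤ ‖(f a - g a)‖ * ∏ i ∈ t, M i :=
      mul_le_mul_of_nonneg_left hprodg (norm_nonneg _)
    rw [Finset.sum_insert ha, Finset.erase_insert ha]
    have h3 : M a * ∑ i ∈ t, ‖(f i - g i)‖ * ∏ j ∈ t.erase i, M j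
        = ∑ i ∈ t, ‖(f i - g i)‖ * ∏ j ∈ (insert a t).erase i, M j := by
      rw [Finset.mul_sum]
      apply Finset.sum_congr rfl
      intro i hi
      have hne : a ≠ i := fun h => ha (h ▸ hi)
      rw [Finset.erase_insert_of_ne hne,
        Finset.prod_insert (fun h => ha (Finset.mem_of_mem_erase h))]
      ring
    rw [h3] at h1
    linarith

lemma charFun_expand {Ω : Type} [MeasurableSpace Ω] (μ : Measure Ω) [IsProbabilityMeasure μ]
    {r : ℝ} (hr0 : 0 < r) (hr1 : r ≤ 1)
    (Y : Ω → ℝ) (hYm : Measurable Y)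
    (hY : Integrable Y μ) (hY2 : Integrable (fun ω => (Y ω)^2) μ)
    (hYr : Integrable (fun ω => |Y ω| ^ ((2+r:ℝ))) μ)
    (hmean : ∫ ω, Y ω ∂μ = 0) (θ : ℝ) :
    ‖((∫ ω, Complex.exp (θ * Y ω * Complex.I) ∂μ) - 1
        + ((θ^2 * (∫ ω, (Y ω)^2 ∂μ) / 2 : ℝ) : ℂ))‖
      ≤ 3/5 * (|θ| ^ ((2+r:ℝ)) * ∫ ω, |Y ω| ^ ((2+r:ℝ)) ∂μ) := by
  have hrw : (fun ω => Complex.exp (θ * Y ω * Complex.I))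
      = fun ω => Complex.exp ((θ * Y ω : ℝ) * Complex.I) := by
    funext ω; push_cast; ring_nf
  rw [hrw]
  have hint_exp : Integrable (fun ω => Complex.exp ((θ * Y ω : ℝ) * Complex.I)) μ := by
    refine Integrable.mono' (integrable_const (1:ℝ)) ?_ ?_
    · exact (Complex.measurable_exp.comp
        ((Complex.measurable_ofReal.comp (hYm.const_mul θ)).mul_const
          Complex.I)).aestronglyMeasurable
    · filter_upwards with ω
      rw [show ‖Complex.exp ((θ * Y ω : ℝ) * Complex.I)‖
          = ‖(Complex.exp ((θ * Y ω : ℝ) * Complex.I))‖ from rfl,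
        Complex.norm_exp_ofReal_mul_I]
  have hint_lin : Integrable (fun ω => ((θ * Y ω : ℝ) : ℂ) * Complex.I) μ :=
    ((hY.const_mul θ).ofReal).mul_const _
  have hint_sq : Integrable (fun ω => (((θ * Y ω : ℝ)):ℂ)^2/2) μ := by
    have h0 : Integrable (fun ω => ((θ * Y ω)^2/2 : ℝ)) μ := by
      have h := (hY2.const_mul (θ^2)).div_const 2
      apply h.congr
      filter_upwards with ω
      ring
    have h0c : Integrable (fun ω => (((θ * Y ω)^2/2 : ℝ) : ℂ)) μ := h0.ofReal
    apply h0c.congr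
    filter_upwards with ω
    push_cast
    ring
  have hint_main : Integrable (fun ω => Complex.exp ((θ * Y ω : ℝ) * Complex.I) - 1
      - ((θ * Y ω : ℝ) : ℂ) * Complex.I + ((θ * Y ω : ℝ):ℂ)^2/2) μ :=
    ((hint_exp.sub (integrable_const 1)).sub hint_lin).add hint_sq
  have h1 : ∫ ω, ((θ * Y ω:ℝ):ℂ) * Complex.I ∂μ = 0 := by
    rw [integral_mul_const]
    have ha : ∫ ω, ((θ * Y ω : ℝ):ℂ) ∂μ = ((∫ ω, θ * Y ω ∂μ : ℝ):ℂ) := integral_ofReal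
    have hb : ∫ ω, θ * Y ω ∂μ = 0 := by rw [integral_const_mul, hmean]; ring
    rw [ha, hb]
    simp
  have h2 : ∫ ω, (((θ * Y ω:ℝ)):ℂ)^2/2 ∂μ = ((θ^2 * (∫ ω, (Y ω)^2 ∂μ) / 2 : ℝ):ℂ) := by
    have hc : (fun ω => (((θ * Y ω:ℝ)):ℂ)^2/2) = fun ω => ((((θ * Y ω)^2/2 : ℝ)):ℂ) := by
      funext ω; push_cast; ring
    have ha : ∫ ω, (((θ * Y ω)^2/2 : ℝ):ℂ) ∂μ = ((∫ ω, (θ * Y ω)^2/2 ∂μ : ℝ):ℂ) :=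
      integral_ofReal
    rw [hc, ha]
    norm_cast
    have hc2 : (fun ω => (θ * Y ω)^2/2) = fun ω => (θ^2/2) * (Y ω)^2 := by
      funext ω; ring
    rw [hc2, integral_const_mul]
    ring
  have hone : ∫ _ω, (1:ℂ) ∂μ = 1 := by simp
  have hkey : (∫ ω, Complex.exp ((θ * Y ω : ℝ) * Complex.I) ∂μ) - 1
      + ((θ^2 * (∫ ω, (Y ω)^2 ∂μ) / 2 : ℝ) : ℂ)
      = ∫ ω, (Complex.exp ((θ * Y ω : ℝ) * Complex.I) - 1
        - ((θ * Y ω : ℝ):ℂ) * Complex.I + ((θ * Y ω : ℝ):ℂ)^2/2) ∂μ := by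
    have i1 : Integrable (fun ω => Complex.exp ((θ * Y ω : ℝ) * Complex.I) - 1) μ :=
      hint_exp.sub (integrable_const 1)
    have i2 : Integrable (fun ω => Complex.exp ((θ * Y ω : ℝ) * Complex.I) - 1
        - ((θ * Y ω : ℝ):ℂ) * Complex.I) μ := i1.sub hint_lin
    rw [integral_add i2 hint_sq, integral_sub i1 hint_lin, integral_sub hint_exp
      (integrable_const 1), h1, h2, hone]
    ring
  rw [hkey]
  have hptw : ∀ ω, ‖Complex.exp ((θ * Y ω : ℝ) * Complex.I) - 1
      - ((θ * Y ω : ℝ):ℂ) * Complex.I + ((θ * Y ω : ℝ):ℂ)^2/2‖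
      ≤ 3/5 * (|θ| ^ ((2+r:ℝ)) * |Y ω| ^ ((2+r:ℝ))) := by
    intro ω
    have hb := claimB hr0 hr1 (θ * Y ω)
    calc ‖Complex.exp ((θ * Y ω : ℝ) * Complex.I) - 1
        - ((θ * Y ω : ℝ):ℂ) * Complex.I + ((θ * Y ω : ℝ):ℂ)^2/2‖
        = ‖(Complex.exp ((θ * Y ω : ℝ) * Complex.I) - 1
        - ((θ * Y ω : ℝ):ℂ) * Complex.I + ((θ * Y ω : ℝ):ℂ)^2/2)‖ := rfl
      _ ≤ 3/5 * |θ * Y ω| ^ ((2+r:ℝ)) := by exact_mod_cast hb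
      _ = 3/5 * (|θ| ^ ((2+r:ℝ)) * |Y ω| ^ ((2+r:ℝ))) := by
          rw [abs_mul, Real.mul_rpow (abs_nonneg _) (abs_nonneg _)]
  have hdom : Integrable (fun ω => 3/5 * (|θ| ^ ((2+r:ℝ)) * |Y ω| ^ ((2+r:ℝ)))) μ := by
    apply (hYr.const_mul (3/5 * |θ| ^ ((2+r:ℝ)))).congr
    filter_upwards with ω
    ring
  calc ‖∫ ω, (Complex.exp ((θ * Y ω : ℝ) * Complex.I) - 1
        - ((θ * Y ω : ℝ):ℂ) * Complex.I + ((θ * Y ω : ℝ):ℂ)^2/2) ∂μ‖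
      ≤ ∫ ω, ‖Complex.exp ((θ * Y ω : ℝ) * Complex.I) - 1
        - ((θ * Y ω : ℝ):ℂ) * Complex.I + ((θ * Y ω : ℝ):ℂ)^2/2‖ ∂μ :=
        norm_integral_le_integral_norm _
    _ ≤ ∫ ω, 3/5 * (|θ| ^ ((2+r:ℝ)) * |Y ω| ^ ((2+r:ℝ))) ∂μ :=
        integral_mono hint_main.norm hdom hptw
    _ = 3/5 * (|θ| ^ ((2+r:ℝ)) * ∫ ω, |Y ω| ^ ((2+r:ℝ)) ∂μ) := by
        rw [show (fun ω => 3/5 * (|θ| ^ ((2+r:ℝ)) * |Y ω| ^ ((2+r:ℝ))))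
          = fun ω => (3/5 * |θ| ^ ((2+r:ℝ))) * |Y ω| ^ ((2+r:ℝ)) from by funext ω; ring,
          integral_const_mul]
        ring

lemma lyapunov {Ω : Type} [MeasurableSpace Ω] (μ : Measure Ω) [IsProbabilityMeasure μ]
    {r : ℝ} (hr0 : 0 < r) (hr1 : r ≤ 1) (Y : Ω → ℝ)
    (hY2 : Integrable (fun ω => (Y ω)^2) μ)
    (hYr : Integrable (fun ω => |Y ω| ^ ((2+r:ℝ))) μ) :
    (∫ ω, (Y ω)^2 ∂μ) ^ (((2+r)/2 : ℝ)) ≤ ∫ ω, |Y ω| ^ ((2+r:ℝ)) ∂μ := by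
  have heq : ∀ y : ℝ, ((y^2) ^ (((2+r)/2 : ℝ))) = |y| ^ ((2+r:ℝ)) := by
    intro y
    rw [← sq_abs y, ← Real.rpow_natCast |y| 2, ← Real.rpow_mul (abs_nonneg y)]
    norm_num
    rw [show (2 * ((2+r)/2) : ℝ) = 2 + r by ring]
  have hconv : ConvexOn ℝ (Set.Ici (0:ℝ)) (fun t : ℝ => t ^ (((2+r)/2 : ℝ))) :=
    convexOn_rpow (by linarith)
  have hcont : ContinuousOn (fun t : ℝ => t ^ (((2+r)/2 : ℝ))) (Set.Ici 0) :=
    continuousOn_id.rpow_const (fun x _ => Or.inr (by positivity))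
  have hmem : ∀ᵐ ω ∂μ, (Y ω)^2 ∈ Set.Ici (0:ℝ) := by
    filter_upwards with ω; exact Set.mem_Ici.2 (sq_nonneg _)
  have hgf : Integrable ((fun t : ℝ => t ^ (((2+r)/2 : ℝ))) ∘ (fun ω => (Y ω)^2)) μ := by
    apply hYr.congr
    filter_upwards with ω
    exact (heq (Y ω)).symm
  have hj := hconv.map_average_le hcont isClosed_Ici hmem hY2 hgf
  rw [average_eq_integral, average_eq_integral] at hj
  refine hj.trans ?_
  apply le_of_eq
  apply integral_congr_ae
  filter_upwards with ω
  exact heq (Y ω)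

end Stmt14Aux

open Stmt14Aux

theorem stmt14 (r : ℝ) (hr0 : 0 < r) (hr1 : r ≤ 1)
    (Ω : Type) (mΩ : MeasurableSpace Ω) (μ : Measure Ω)
    (hprob : IsProbabilityMeasure μ)
    (n : ℕ) (X : Fin n → Ω → ℕ)
    (hmeas : ∀ k, Measurable (X k))
    (hind : iIndepFun X μ)
    (hint1 : ∀ k, Integrable (fun ω => ((X k ω : ℝ))) μ)
    (hint2 : ∀ k, Integrable (fun ω => ((X k ω : ℝ) - meanOf μ (X k)) ^ 2) μ)
    (hintr : ∀ k, Integrable (fun ω => |(X k ω : ℝ) - meanOf μ (X k)| ^ (2 + r)) μ)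
    (σ β δ : ℝ)
    (hσ : σ = Real.sqrt (∑ k, cmom μ (X k) 2))
    (hβ : β = ∑ k, cmom μ (X k) (2 + r))
    (hδ : δ = (σ ^ 2 / (2 * β)) ^ (1 / r))
    (hσpos : 0 < σ)
    (hmax : ∀ k, Real.sqrt (cmom μ (X k) 2) ≤ σ / 2) :
    ∀ θ : ℝ, |θ| ≤ δ →
      ‖((∏ k, ∫ ω, Complex.exp (θ * ((X k ω : ℝ) - meanOf μ (X k)) * Complex.I) ∂μ)
          - Real.exp (-σ ^ 2 * θ ^ 2 / 2))‖
        ≤ β * |θ| ^ (2 + r) * Real.exp (-σ ^ 2 * θ ^ 2 / 8) := by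
  intro θ hθ
  -- basic per-factor data
  set Y : Fin n → Ω → ℝ := fun k ω => (X k ω : ℝ) - meanOf μ (X k) with hYdef
  have hYm : ∀ k, Measurable (Y k) := fun k =>
    (measurable_from_top.comp (hmeas k)).sub measurable_const
  have hYint : ∀ k, Integrable (Y k) μ := fun k => (hint1 k).sub (integrable_const _)
  have hmean : ∀ k, ∫ ω, Y k ω ∂μ = 0 := by
    intro k
    have : ∫ ω, ((X k ω : ℝ) - meanOf μ (X k)) ∂μ
        = (∫ ω, (X k ω : ℝ) ∂μ) - meanOf μ (X k) := by
      rw [integral_sub (hint1 k) (integrable_const _), integral_const]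
      simp [measure_univ]
    exact this.trans (by simp [meanOf])
  set v : Fin n → ℝ := fun k => ∫ ω, ((X k ω : ℝ) - meanOf μ (X k))^2 ∂μ with hvdef
  set b : Fin n → ℝ := fun k => ∫ ω, |(X k ω : ℝ) - meanOf μ (X k)| ^ ((2+r:ℝ)) ∂μ with hbdef
  have hcm2 : ∀ k, cmom μ (X k) 2 = v k := by
    intro k
    unfold cmom
    apply integral_congr_ae
    filter_upwards with ω
    rw [show ((2:ℝ)) = ((2:ℕ):ℝ) by norm_num, Real.rpow_natCast, sq_abs]
  have hcmr : ∀ k, cmom μ (X k) (2+r) = b k := fun k => rfl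
  have hv0 : ∀ k, 0 ≤ v k := fun k => integral_nonneg (fun ω => sq_nonneg _)
  have hb0 : ∀ k, 0 ≤ b k := fun k =>
    integral_nonneg (fun ω => Real.rpow_nonneg (abs_nonneg _) _)
  have hLya : ∀ k, (v k) ^ (((2+r)/2:ℝ)) ≤ b k := fun k =>
    lyapunov μ hr0 hr1 (Y k) (hint2 k) (hintr k)
  have hS : σ^2 = ∑ k, v k := by
    have hnn : 0 ≤ ∑ k, cmom μ (X k) 2 := by
      apply Finset.sum_nonneg
      intro k _
      rw [hcm2 k]
      exact hv0 k
    rw [hσ, Real.sq_sqrt hnn]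
    exact Finset.sum_congr rfl (fun k _ => hcm2 k)
  have hvmax : ∀ k, v k ≤ σ^2/4 := by
    intro k
    have h := hmax k
    rw [hcm2 k] at h
    nlinarith [Real.sq_sqrt (hv0 k), Real.sqrt_nonneg (v k)]
  have hβb : β = ∑ k, b k := by
    rw [hβ]; exact Finset.sum_congr rfl (fun k _ => hcmr k)
  have hβ0 : 0 ≤ β := by
    rw [hβb]; exact Finset.sum_nonneg (fun k _ => hb0 k)
  have hβpos : 0 < β := by
    rcases eq_or_lt_of_le hβ0 with h0 | h0
    · exfalso
      have hsum0 : ∑ k, b k = 0 := by rw [← hβb, ← h0]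
      have hball : ∀ k ∈ Finset.univ, b k = 0 :=
        (Finset.sum_eq_zero_iff_of_nonneg (fun k _ => hb0 k)).1 hsum0
      have hvall : ∀ k : Fin n, v k = 0 := by
        intro k
        by_contra hne
        have hvpos : 0 < v k := lt_of_le_of_ne (hv0 k) (Ne.symm hne)
        have hp := Real.rpow_pos_of_pos hvpos (((2+r)/2:ℝ))
        have h2 := hLya k
        rw [hball k (Finset.mem_univ k)] at h2
        linarith
      have hz : σ^2 = 0 := by rw [hS]; exact Finset.sum_eq_zero (fun k _ => hvall k)
      nlinarith
    · exact h0
  -- θ = 0 case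
  by_cases hθ0 : θ = 0
  · subst hθ0
    have hP : ∀ k : Fin n, (∫ ω, Complex.exp ((0:ℝ) * ((X k ω : ℝ) - meanOf μ (X k))
        * Complex.I) ∂μ) = 1 := by
      intro k
      have : ∀ ω, Complex.exp ((0:ℝ) * ((X k ω : ℝ) - meanOf μ (X k)) * Complex.I) = 1 := by
        intro ω
        norm_num
      rw [integral_congr_ae (Filter.Eventually.of_forall this)]
      simp
    rw [Finset.prod_congr rfl (fun k _ => hP k)]
    norm_num
    rw [Real.zero_rpow (by positivity)]
    simp
  -- main case
  have habsθ : 0 < |θ| := abs_pos.2 hθ0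
  set a : Fin n → ℝ := fun k => θ^2 * v k / 2 with hadef
  set e : Fin n → ℝ := fun k => |θ| ^ ((2+r:ℝ)) * b k with hedef
  have ha0 : ∀ k, 0 ≤ a k := fun k => by
    have := hv0 k; positivity
  have he0 : ∀ k, 0 ≤ e k := fun k => by
    have := hb0 k; positivity
  have hpow2 : (θ^2 : ℝ)^(((2+r)/2:ℝ)) = |θ| ^ ((2+r:ℝ)) := by
    rw [← sq_abs θ, ← Real.rpow_natCast |θ| 2, ← Real.rpow_mul (abs_nonneg θ)]
    norm_num
    rw [show (2 * ((2+r)/2) : ℝ) = 2 + r by ring]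
  have hL : ∀ k, (2 * a k) ^ (((2+r)/2 : ℝ)) ≤ e k := by
    intro k
    have h1 : 2 * a k = θ^2 * v k := by rw [hadef]; ring
    rw [h1, Real.mul_rpow (sq_nonneg θ) (hv0 k), hpow2]
    exact mul_le_mul_of_nonneg_left (hLya k) (Real.rpow_nonneg (abs_nonneg θ) _)
  have hεa : |θ| ^ ((2+r:ℝ)) * β ≤ σ^2 * θ^2 / 2 := by
    have hq0 : (0:ℝ) ≤ σ^2/(2*β) := by positivity
    have h1 : |θ| ^ (r:ℝ) ≤ σ^2/(2*β) := by
      have h2 : |θ| ^ (r:ℝ) ≤ δ ^ (r:ℝ) := Real.rpow_le_rpow (abs_nonneg θ) hθ hr0.le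
      rwa [hδ, ← Real.rpow_mul hq0, one_div, inv_mul_cancel₀ hr0.ne', Real.rpow_one] at h2
    have h2 : |θ| ^ ((2+r:ℝ)) = θ^2 * |θ| ^ (r:ℝ) := by
      rw [Real.rpow_add habsθ 2 r, rpow_two', sq_abs]
    rw [h2]
    calc θ^2 * |θ| ^ (r:ℝ) * β ≤ θ^2 * (σ^2/(2*β)) * β := by
          apply mul_le_mul_of_nonneg_right (mul_le_mul_of_nonneg_left h1 (sq_nonneg θ)) hβ0
      _ = σ^2*θ^2/2 := by field_simp
  -- the characteristic functions and Gaussian factors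
  set φ : Fin n → ℂ := fun k =>
    ∫ ω, Complex.exp (θ * ((X k ω : ℝ) - meanOf μ (X k)) * Complex.I) ∂μ with hφdef
  set g : Fin n → ℂ := fun k => ((Real.exp (-(a k)) : ℝ) : ℂ) with hgdef
  set M : Fin n → ℝ := fun k => Real.exp (-(a k) + 3/5 * e k) with hMdef
  have hexpand : ∀ k, ‖(φ k - 1 + ((a k : ℝ):ℂ))‖ ≤ 3/5 * e k := by
    intro k
    have h := charFun_expand μ hr0 hr1 (Y k) (hYm k) (hYint k) (hint2 k) (hintr k) (hmean k) θ
    have hfeq : (∫ ω, Complex.exp ((θ:ℂ) * ((Y k ω : ℝ):ℂ) * Complex.I) ∂μ) = φ k := by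
      apply integral_congr_ae
      filter_upwards with ω
      norm_cast
    rw [hfeq] at h
    exact h
  have hA1 : ∀ k, ‖(φ k)‖ ≤ 1 := by
    intro k
    have h := norm_integral_le_of_norm_le_const (μ := μ)
      (f := fun ω => Complex.exp (θ * ((X k ω : ℝ) - meanOf μ (X k)) * Complex.I)) (C := 1) ?_
    · simpa [measure_univ, φ] using h
    · filter_upwards with ω
      have : (θ:ℂ) * ((X k ω : ℝ) - meanOf μ (X k)) * Complex.I
          = ((θ * ((X k ω : ℝ) - meanOf μ (X k)) : ℝ) : ℂ) * Complex.I := by push_cast; ring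
      rw [show ‖Complex.exp (θ * ((X k ω : ℝ) - meanOf μ (X k)) * Complex.I)‖
          = ‖(Complex.exp (θ * ((X k ω : ℝ) - meanOf μ (X k)) * Complex.I))‖ from rfl,
        this, Complex.norm_exp_ofReal_mul_I]
  have hAa : ∀ k, ‖(φ k)‖ ≤ |1 - a k| + 3/5 * e k := by
    intro k
    have htri : ‖(φ k)‖ ≤ ‖(φ k - 1 + ((a k : ℝ):ℂ))‖
        + ‖((1:ℂ) - ((a k : ℝ):ℂ))‖ := by
      have hid : φ k = (φ k - 1 + ((a k : ℝ):ℂ)) + ((1:ℂ) - ((a k : ℝ):ℂ)) := by ring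
      exact le_of_le_of_eq (le_of_eq (congrArg norm hid)) rfl |>.trans
        (norm_add_le _ _)
    have habs1 : ‖((1:ℂ) - ((a k : ℝ):ℂ))‖ = |1 - a k| := by
      rw [show (1:ℂ) - ((a k : ℝ):ℂ) = (((1 - a k : ℝ)):ℂ) by push_cast; ring,
        Complex.norm_real, Real.norm_eq_abs]
    rw [habs1] at htri
    have := hexpand k
    linarith
  have hMb : ∀ k, ‖(φ k)‖ ≤ M k := fun k =>
    Mbound hr0 hr1 (ha0 k) (he0 k) (hL k) (hA1 k) (hAa k)
  have hM0 : ∀ k, 0 ≤ M k := fun k => (Real.exp_pos _).le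
  have hgM : ∀ k, ‖(g k)‖ ≤ M k := by
    intro k
    rw [hgdef]
    simp only [Complex.norm_real, Real.norm_eq_abs, abs_of_nonneg (Real.exp_pos _).le]
    rw [hMdef]
    apply Real.exp_le_exp.2
    have := he0 k
    linarith
  have hD1 : ∀ k, ‖(φ k - g k)‖
      ≤ 3/5 * e k + (Real.exp (-(a k)) - (1 - a k)) := by
    intro k
    have hsplit : φ k - g k = (φ k - 1 + ((a k : ℝ):ℂ))
        + (((1 - a k - Real.exp (-(a k)) : ℝ)):ℂ) := by
      rw [hgdef]
      push_cast
      ring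
    have htri : ‖(φ k - g k)‖ ≤ ‖(φ k - 1 + ((a k : ℝ):ℂ))‖
        + ‖((((1 - a k - Real.exp (-(a k)) : ℝ)):ℂ))‖ := by
      rw [hsplit]; exact norm_add_le _ _
    have habs2 : ‖((((1 - a k - Real.exp (-(a k)) : ℝ)):ℂ))‖
        = Real.exp (-(a k)) - (1 - a k) := by
      rw [Complex.norm_real, Real.norm_eq_abs, abs_of_nonpos]
      · ring
      · have := Real.add_one_le_exp (-(a k))
        linarith
    rw [habs2] at htri
    have := hexpand k
    linarith
  have hD2 : ∀ k, ‖(φ k - g k)‖ ≤ ‖(φ k)‖ + Real.exp (-(a k)) := by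
    intro k
    calc ‖(φ k - g k)‖ = ‖φ k - g k‖ := rfl
      _ ≤ ‖φ k‖ + ‖g k‖ := norm_sub_le _ _
      _ = ‖(φ k)‖ + Real.exp (-(a k)) := by
          rw [hgdef]
          simp only [Complex.norm_real, Real.norm_eq_abs,
            abs_of_nonneg (Real.exp_pos (-(a k))).le]
  have hD : ∀ k, ‖(φ k - g k)‖
      ≤ e k * Real.exp (-(2/5) * a k + 3/5 * e k) := fun k =>
    Dbound hr0 hr1 (ha0 k) (he0 k) (hL k) (hA1 k) (hD1 k) (hD2 k)
  -- sums
  have hsum_a : ∑ k, a k = σ^2 * θ^2 / 2 := by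
    rw [hadef]
    simp only []
    rw [← Finset.sum_div, ← Finset.mul_sum, ← hS]
    ring
  have hsum_e : ∑ k, e k = |θ| ^ ((2+r:ℝ)) * β := by
    rw [hedef]
    simp only []
    rw [← Finset.mul_sum, ← hβb]
  -- the Gaussian product
  have hgprod : ∏ k, g k = ((Real.exp (-σ^2*θ^2/2) : ℝ) : ℂ) := by
    rw [hgdef]
    simp only []
    rw [← Complex.ofReal_prod, ← Real.exp_sum]
    congr 1
    rw [Finset.sum_neg_distrib, hsum_a]
    ring
  have htel := prod_sub_prod_bound Finset.univ φ g M hM0 hMb hgM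
  rw [hgprod] at htel
  have hterm : ∀ k ∈ Finset.univ, ‖(φ k - g k)‖ * ∏ j ∈ Finset.univ.erase k, M j
      ≤ e k * Real.exp (-σ^2*θ^2/8) := by
    intro k _
    have hprodM : ∏ j ∈ Finset.univ.erase k, M j
        = Real.exp (∑ j ∈ Finset.univ.erase k, (-(a j) + 3/5 * e j)) := by
      rw [Real.exp_sum]
    have hsum_erase : ∑ j ∈ Finset.univ.erase k, (-(a j) + 3/5 * e j)
        = (∑ j, (-(a j) + 3/5 * e j)) - (-(a k) + 3/5 * e k) :=
      Finset.sum_erase_eq_sub (Finset.mem_univ k)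
    have hsum_split : ∑ j, (-(a j) + 3/5 * e j)
        = -(σ^2*θ^2/2) + 3/5 * (|θ| ^ ((2+r:ℝ)) * β) := by
      rw [Finset.sum_add_distrib, Finset.sum_neg_distrib, hsum_a, ← Finset.mul_sum, hsum_e]
    have hak : a k ≤ σ^2*θ^2/8 := by
      rw [hadef]
      simp only []
      nlinarith [hvmax k, sq_nonneg θ]
    have hexpo : -(2/5) * a k + 3/5 * e k
        + ((∑ j, (-(a j) + 3/5 * e j)) - (-(a k) + 3/5 * e k)) ≤ -σ^2*θ^2/8 := by
      rw [hsum_split]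
      have := hεa
      linarith
    calc ‖(φ k - g k)‖ * ∏ j ∈ Finset.univ.erase k, M j
        ≤ (e k * Real.exp (-(2/5) * a k + 3/5 * e k)) * ∏ j ∈ Finset.univ.erase k, M j := by
          apply mul_le_mul_of_nonneg_right (hD k)
          exact Finset.prod_nonneg (fun j _ => hM0 j)
      _ = e k * Real.exp (-(2/5) * a k + 3/5 * e k
            + ((∑ j, (-(a j) + 3/5 * e j)) - (-(a k) + 3/5 * e k))) := by
          rw [hprodM, hsum_erase, mul_assoc, ← Real.exp_add]
      _ ≤ e k * Real.exp (-σ^2*θ^2/8) := by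
          apply mul_le_mul_of_nonneg_left (Real.exp_le_exp.2 hexpo) (he0 k)
  calc ‖((∏ k, φ k) - ((Real.exp (-σ^2*θ^2/2) : ℝ) : ℂ))‖
      ≤ ∑ k, ‖(φ k - g k)‖ * ∏ j ∈ Finset.univ.erase k, M j := htel
    _ ≤ ∑ k, e k * Real.exp (-σ^2*θ^2/8) := Finset.sum_le_sum hterm
    _ = (∑ k, e k) * Real.exp (-σ^2*θ^2/8) := by rw [← Finset.sum_mul]
    _ = β * |θ| ^ ((2+r:ℝ)) * Real.exp (-σ^2*θ^2/8) := by rw [hsum_e]; ring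
end

section
/- Fix A ∈ (0,1), an integer r ≥ 1, and a sequence R(q) > 0 (q ≥ 1) such that Σ_{q≥1} q^r A^q/(R(1)⋯R(q)) < ∞ (as holds when liminf_{q→∞} (R(1)⋯R(q))^{1/q} = 1). Then there exist constants 0 < c ≤ C < ∞, depending only on A, r and R, with the following property: for any rates μ(q) > 0 and any μ > 0 with μ(q) ≥ R(q)·μ for all q ≥ 1, and any parameter z > 0 with z/μ ≤ A, the random variable X with the power-series distribution with rates μ(·) and parameter z satisfies c·z/μ(1) ≤ E X ≤ C·z/μ(1) and c·z/μ(1) ≤ E|X − E X|^r ≤ C·z/μ(1). -/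
/-- Normalizing constant `f(z)` of the power-series distribution with rates `μs (q)`,
`q ≥ 1` (the empty product is `1`). -/
noncomputable def psF (μs : ℕ → ℝ) (z : ℝ) : ℝ :=
  ∑' x : ℕ, z ^ x / ∏ p ∈ Finset.range x, μs (p + 1)

/-- Mean of the power-series distribution with rates `μs` and parameter `z`. -/
noncomputable def psMean (μs : ℕ → ℝ) (z : ℝ) : ℝ :=
  (∑' x : ℕ, (x : ℝ) * z ^ x / ∏ p ∈ Finset.range x, μs (p + 1)) / psF μs z

/-- Centered absolute moment of integer order `r` of the power-series distribution
with rates `μs` and parameter `z`. -/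
noncomputable def psAbsCMom (μs : ℕ → ℝ) (z : ℝ) (r : ℕ) : ℝ :=
  (∑' x : ℕ, |(x : ℝ) - psMean μs z| ^ r * z ^ x / ∏ p ∈ Finset.range x, μs (p + 1))
    / psF μs z

private lemma one_le_pow_aux {x : ℝ} (hx : 1 ≤ x) (n : ℕ) : 1 ≤ x ^ n := by
  simpa using pow_le_pow_left₀ zero_le_one hx n

set_option maxHeartbeats 2000000 in
theorem stmt15 (A : ℝ) (hA : A ∈ Set.Ioo (0 : ℝ) 1) (r : ℕ) (hr : 1 ≤ r)
    (R : ℕ → ℝ) (hRpos : ∀ q, 1 ≤ q → 0 < R q)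
    (hsum : Summable fun q : ℕ =>
      (q : ℝ) ^ r * A ^ q / ∏ p ∈ Finset.range q, R (p + 1)) :
    ∃ c C : ℝ, 0 < c ∧ c ≤ C ∧
      ∀ (μs : ℕ → ℝ) (μ z : ℝ),
        (∀ q, 1 ≤ q → 0 < μs q) → 0 < μ → 0 < z → z / μ ≤ A →
        (∀ q, 1 ≤ q → R q * μ ≤ μs q) →
        (c * (z / μs 1) ≤ psMean μs z ∧ psMean μs z ≤ C * (z / μs 1)) ∧
        (c * (z / μs 1) ≤ psAbsCMom μs z r ∧ psAbsCMom μs z r ≤ C * (z / μs 1)) := by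
  obtain ⟨hA0, hA1⟩ := hA
  obtain ⟨r, rfl⟩ : ∃ r', r = r' + 1 := ⟨r - 1, (Nat.succ_pred_eq_of_pos hr).symm⟩
  have hRprod : ∀ x : ℕ, 0 < ∏ p ∈ Finset.range x, R (p + 1) := fun x =>
    Finset.prod_pos fun p _ => hRpos (p + 1) (Nat.le_add_left 1 p)
  set a : ℕ → ℝ := fun x => A ^ x / ∏ p ∈ Finset.range x, R (p + 1) with ha
  clear_value a
  have hapos : ∀ x, 0 < a x := by
    intro x; rw [ha]; exact div_pos (pow_pos hA0 x) (hRprod x)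
  have hsum' : Summable fun x : ℕ => (x : ℝ) ^ (r + 1) * a x := by
    simp only [ha]
    simpa only [mul_div_assoc] using hsum
  have hsa : Summable a := by
    rw [← summable_nat_add_iff 1]
    refine Summable.of_nonneg_of_le (fun n => (hapos _).le) (fun n => ?_)
      ((summable_nat_add_iff 1).2 hsum')
    have h1 : (1 : ℝ) ≤ ((n + 1 : ℕ) : ℝ) ^ (r + 1) :=
      one_le_pow_aux (by exact_mod_cast Nat.succ_le_succ (Nat.zero_le n)) _
    exact le_mul_of_one_le_left (hapos _).le h1
  set s : ℕ → ℝ := fun x => ((x : ℝ) + 1) ^ (r + 1) * a x with hs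
  clear_value s
  have hspos : ∀ x, 0 < s x := by
    intro x; rw [hs]
    exact mul_pos (pow_pos (by positivity) _) (hapos x)
  have hss : Summable s := by
    refine Summable.of_nonneg_of_le (fun x => (hspos x).le) (fun x => ?_)
      (((hsum'.add hsa).mul_left ((2 : ℝ) ^ (r + 1))))
    have hb : ((x : ℝ) + 1) ^ (r + 1) ≤ (2 : ℝ) ^ (r + 1) * ((x : ℝ) ^ (r + 1) + 1) := by
      rcases Nat.eq_zero_or_pos x with hx | hx
      · subst hx
        simp only [Nat.cast_zero, zero_add, one_pow, zero_pow (Nat.succ_ne_zero r), mul_one]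
        exact one_le_pow_aux one_le_two _
      · have hx1 : (1 : ℝ) ≤ (x : ℝ) := by exact_mod_cast hx
        calc ((x : ℝ) + 1) ^ (r + 1) ≤ (2 * (x : ℝ)) ^ (r + 1) := by
              apply pow_le_pow_left₀ (by positivity); linarith
          _ = 2 ^ (r + 1) * (x : ℝ) ^ (r + 1) := by rw [mul_pow]
          _ ≤ 2 ^ (r + 1) * ((x : ℝ) ^ (r + 1) + 1) := by
              nlinarith [pow_pos (show (0:ℝ) < 2 by norm_num) (r + 1)]
    calc s x = ((x : ℝ) + 1) ^ (r + 1) * a x := by rw [hs]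
      _ ≤ (2 : ℝ) ^ (r + 1) * ((x : ℝ) ^ (r + 1) + 1) * a x :=
          mul_le_mul_of_nonneg_right hb (hapos x).le
      _ = (2 : ℝ) ^ (r + 1) * ((x : ℝ) ^ (r + 1) * a x + a x) := by ring
  set Sa := ∑' x : ℕ, a x with hSa
  clear_value Sa
  set Sr := ∑' x : ℕ, (x : ℝ) ^ (r + 1) * a x with hSr
  clear_value Sr
  set Ss := ∑' x : ℕ, s x with hSs
  clear_value Ss
  have hSa1 : 1 ≤ Sa := by
    rw [hSa]
    have h := Summable.le_tsum hsa 0 (fun j _ => (hapos j).le)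
    have ha0 : a 0 = 1 := by simp [ha]
    rwa [ha0] at h
  have hSa0 : 0 < Sa := lt_of_lt_of_le one_pos hSa1
  have hSr0 : 0 < Sr := by
    rw [hSr]
    have h := Summable.le_tsum hsum' 1
      (fun j _ => mul_nonneg (by positivity) (hapos j).le)
    simp only [Nat.cast_one, one_pow, one_mul] at h
    exact lt_of_lt_of_le (hapos 1) h
  have hSs0 : 0 < Ss := by
    rw [hSs]
    exact lt_of_lt_of_le (hspos 0) (Summable.le_tsum hss 0 fun j _ => (hspos j).le)
  set C1 : ℝ := (R 1 / A) * Sr with hC1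
  clear_value C1
  have hC1pos : 0 < C1 := by
    rw [hC1]; exact mul_pos (div_pos (hRpos 1 le_rfl) hA0) hSr0
  set C2 : ℝ := Sr ^ r * C1 + (Sr + 1) ^ (r + 1) * ((R 1 / A) * Ss) with hC2
  clear_value C2
  set c : ℝ := min (1 / Sa) ((1 / 2) ^ (r + 1) / Sa ^ 2) with hc
  clear_value c
  set C : ℝ := max c (max C1 C2) with hC
  clear_value C
  have hc0 : 0 < c := by
    rw [hc]
    exact lt_min (div_pos one_pos hSa0)
      (div_pos (pow_pos (by norm_num) _) (pow_pos hSa0 2))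
  have hcC : c ≤ C := by rw [hC]; exact le_max_left _ _
  refine ⟨c, C, hc0, hcC, ?_⟩
  intro μs μ z hμs hμ0 hz0 hzA hRμ
  have hμprod : ∀ x : ℕ, 0 < ∏ p ∈ Finset.range x, μs (p + 1) := fun x =>
    Finset.prod_pos fun p _ => hμs (p + 1) (Nat.le_add_left 1 p)
  set w : ℕ → ℝ := fun x => z ^ x / ∏ p ∈ Finset.range x, μs (p + 1) with hw
  clear_value w
  have hwpos : ∀ x, 0 < w x := by
    intro x; rw [hw]; exact div_pos (pow_pos hz0 x) (hμprod x)
  have hw0 : w 0 = 1 := by simp [hw]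
  set t := z / μs 1 with htdef
  clear_value t
  have ht0 : 0 < t := by rw [htdef]; exact div_pos hz0 (hμs 1 le_rfl)
  have hw1 : w 1 = t := by simp [hw, htdef]
  have hzAμ : z ≤ A * μ := by
    have := (div_le_iff₀ hμ0).1 hzA; linarith
  have htA : t ≤ A / R 1 := by
    have h1 : z / μs 1 ≤ (A * μ) / (R 1 * μ) :=
      div_le_div₀ (mul_pos hA0 hμ0).le hzAμ (mul_pos (hRpos 1 le_rfl) hμ0) (hRμ 1 le_rfl)
    have h2 : (A * μ) / (R 1 * μ) = A / R 1 := by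
      rw [mul_div_mul_right _ _ (ne_of_gt hμ0)]
    rw [htdef]; rw [h2] at h1; exact h1
  have key : ∀ (n : ℕ) (g h : ℕ → ℝ), (∀ p, 0 < h p) → (∀ p, h p * μ ≤ g p) →
      z ^ n / ∏ p ∈ Finset.range n, g p ≤ A ^ n / ∏ p ∈ Finset.range n, h p := by
    intro n g h hh hgh
    have hg : ∀ p, 0 < g p := fun p => lt_of_lt_of_le (mul_pos (hh p) hμ0) (hgh p)
    have hP : 0 < ∏ p ∈ Finset.range n, g p := Finset.prod_pos fun p _ => hg p
    have hQ : 0 < ∏ p ∈ Finset.range n, h p := Finset.prod_pos fun p _ => hh p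
    rw [div_le_div_iff₀ hP hQ]
    have h1 : (∏ p ∈ Finset.range n, h p) * μ ^ n ≤ ∏ p ∈ Finset.range n, g p := by
      have he : (∏ p ∈ Finset.range n, h p) * μ ^ n
          = ∏ p ∈ Finset.range n, (h p * μ) := by
        rw [Finset.prod_mul_distrib, Finset.prod_const, Finset.card_range]
      rw [he]
      exact Finset.prod_le_prod (fun p _ => (mul_pos (hh p) hμ0).le) (fun p _ => hgh p)
    have h2 : z ^ n ≤ A ^ n * μ ^ n := by
      rw [← mul_pow]; exact pow_le_pow_left₀ hz0.le hzAμ n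
    calc z ^ n * ∏ p ∈ Finset.range n, h p
        ≤ (A ^ n * μ ^ n) * ∏ p ∈ Finset.range n, h p :=
          mul_le_mul_of_nonneg_right h2 hQ.le
      _ = A ^ n * ((∏ p ∈ Finset.range n, h p) * μ ^ n) := by ring
      _ ≤ A ^ n * ∏ p ∈ Finset.range n, g p :=
          mul_le_mul_of_nonneg_left h1 (pow_nonneg hA0.le n)
  have hwa : ∀ x, w x ≤ a x := by
    intro x
    rw [hw, ha]
    exact key x _ _ (fun p => hRpos _ (Nat.le_add_left 1 p))
      (fun p => hRμ _ (Nat.le_add_left 1 p))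
  have hwt : ∀ n : ℕ, w (n + 1) ≤ t * ((R 1 / A) * a (n + 1)) := by
    intro n
    have hsplit : w (n + 1) = t * (z ^ n / ∏ p ∈ Finset.range n, μs (p + 1 + 1)) := by
      have hpr := Finset.prod_range_succ' (fun p => μs (p + 1)) n
      simp only [hw, htdef, hpr]
      have hμ1 : μs (0 + 1) ≠ 0 := ne_of_gt (hμs 1 le_rfl)
      have hp2 : (∏ p ∈ Finset.range n, μs (p + 1 + 1)) ≠ 0 :=
        ne_of_gt (Finset.prod_pos fun p _ => hμs _ (by omega))
      rw [pow_succ]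
      field_simp
    have hmid : z ^ n / ∏ p ∈ Finset.range n, μs (p + 1 + 1) ≤
        A ^ n / ∏ p ∈ Finset.range n, R (p + 1 + 1) :=
      key n _ _ (fun p => hRpos (p + 1 + 1) (by omega)) (fun p => hRμ (p + 1 + 1) (by omega))
    have haeq : (R 1 / A) * a (n + 1) = A ^ n / ∏ p ∈ Finset.range n, R (p + 1 + 1) := by
      have hpr := Finset.prod_range_succ' (fun p => R (p + 1)) n
      simp only [ha, hpr]
      have hR1 : R (0 + 1) ≠ 0 := ne_of_gt (hRpos 1 le_rfl)
      have hp2 : (∏ p ∈ Finset.range n, R (p + 1 + 1)) ≠ 0 :=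
        ne_of_gt (Finset.prod_pos fun p _ => hRpos _ (by omega))
      rw [pow_succ]
      field_simp
    rw [hsplit, haeq]
    exact mul_le_mul_of_nonneg_left hmid ht0.le
  have hws : Summable w := Summable.of_nonneg_of_le (fun x => (hwpos x).le) hwa hsa
  set F := ∑' x : ℕ, w x with hF
  clear_value F
  have hFeq : psF μs z = F := by simp only [psF, hF, hw]
  have hf1 : (1 : ℝ) ≤ F := by
    rw [hF]
    have h := Summable.le_tsum hws 0 (fun j _ => (hwpos j).le)
    rwa [hw0] at h
  have hfpos : 0 < F := lt_of_lt_of_le one_pos hf1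
  have hfSa : F ≤ Sa := by
    rw [hF, hSa]; exact Summable.tsum_le_tsum hwa hws hsa
  set m := psMean μs z with hmdef
  clear_value m
  set S1 := ∑' x : ℕ, (x : ℝ) * w x with hS1
  clear_value S1
  have hS1sum : Summable fun x : ℕ => (x : ℝ) * w x := by
    refine Summable.of_nonneg_of_le
      (fun x => mul_nonneg (Nat.cast_nonneg x) (hwpos x).le) (fun x => ?_) hsum'
    rcases Nat.eq_zero_or_pos x with hx | hx
    · subst hx; simp
    · have hx1 : (1 : ℝ) ≤ (x : ℝ) := by exact_mod_cast hx
      exact mul_le_mul (le_self_pow₀ hx1 (by omega)) (hwa x) (hwpos x).le (by positivity)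
  have hmeq : m = S1 / F := by
    rw [hmdef, psMean, hFeq]
    congr 1
    simp only [hS1, hw, mul_div_assoc]
  have hS1nonneg : 0 ≤ S1 := by
    rw [hS1]; exact tsum_nonneg fun x => mul_nonneg (Nat.cast_nonneg x) (hwpos x).le
  have hS1low : t ≤ S1 := by
    rw [hS1]
    have h := Summable.le_tsum hS1sum 1 (fun j _ => mul_nonneg (Nat.cast_nonneg j) (hwpos j).le)
    rw [hw1] at h
    simpa using h
  have hS1up : S1 ≤ t * C1 := by
    have hb : ∀ x : ℕ, (x : ℝ) * w x ≤ (t * (R 1 / A)) * ((x : ℝ) ^ (r + 1) * a x) := by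
      intro x
      rcases Nat.eq_zero_or_pos x with hx | hx
      · subst hx; simp
      · obtain ⟨n, rfl⟩ := Nat.exists_eq_add_of_le hx
        have hx1 : (1 : ℝ) ≤ ((1 + n : ℕ) : ℝ) := by exact_mod_cast hx
        have h1 : ((1 + n : ℕ) : ℝ) ≤ ((1 + n : ℕ) : ℝ) ^ (r + 1) :=
          le_self_pow₀ hx1 (by omega)
        have h2 : w (1 + n) ≤ t * ((R 1 / A) * a (1 + n)) := by
          have := hwt n; rwa [Nat.add_comm n 1] at this
        calc ((1 + n : ℕ) : ℝ) * w (1 + n)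
            ≤ ((1 + n : ℕ) : ℝ) ^ (r + 1) * (t * ((R 1 / A) * a (1 + n))) :=
              mul_le_mul h1 h2 (hwpos _).le (by positivity)
          _ = (t * (R 1 / A)) * (((1 + n : ℕ) : ℝ) ^ (r + 1) * a (1 + n)) := by ring
    calc S1 = ∑' x : ℕ, (x : ℝ) * w x := hS1
      _ ≤ ∑' x : ℕ, (t * (R 1 / A)) * ((x : ℝ) ^ (r + 1) * a x) :=
          Summable.tsum_le_tsum hb hS1sum (hsum'.mul_left _)
      _ = (t * (R 1 / A)) * Sr := by rw [tsum_mul_left, hSr]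
      _ = t * C1 := by rw [hC1]; ring
  have hm_low : t / Sa ≤ m := by
    rw [hmeq]
    exact div_le_div₀ hS1nonneg hS1low hfpos hfSa
  have hm_up : m ≤ t * C1 := by
    rw [hmeq]
    exact le_trans (div_le_self hS1nonneg hf1) hS1up
  have hm0 : 0 ≤ m := le_trans (div_nonneg ht0.le hSa0.le) hm_low
  have hmB : m ≤ Sr := by
    have h1 : t * C1 ≤ (A / R 1) * C1 := mul_le_mul_of_nonneg_right htA hC1pos.le
    have h2 : (A / R 1) * C1 = Sr := by
      have h3 : (A / R 1) * (R 1 / A) = 1 := by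
        rw [div_mul_div_comm, mul_comm A (R 1)]
        exact div_self (mul_pos (hRpos 1 le_rfl) hA0).ne'
      rw [hC1, ← mul_assoc, h3, one_mul]
    linarith
  have goal1a : c * t ≤ m := by
    have hc1 : c ≤ 1 / Sa := by rw [hc]; exact min_le_left _ _
    calc c * t ≤ (1 / Sa) * t := mul_le_mul_of_nonneg_right hc1 ht0.le
      _ = t / Sa := by ring
      _ ≤ m := hm_low
  have goal1b : m ≤ C * t := by
    have hC1C : C1 ≤ C := by rw [hC]; exact le_trans (le_max_left _ _) (le_max_right _ _)
    calc m ≤ t * C1 := hm_up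
      _ = C1 * t := by ring
      _ ≤ C * t := mul_le_mul_of_nonneg_right hC1C ht0.le
  set N := ∑' x : ℕ, |(x : ℝ) - m| ^ (r + 1) * w x with hN
  clear_value N
  have hMeq : psAbsCMom μs z (r + 1) = N / F := by
    rw [psAbsCMom, hFeq, hN]
    congr 1
    simp only [hw, ← hmdef, mul_div_assoc]
  have habs : ∀ x : ℕ, |(x : ℝ) - m| ≤ (Sr + 1) * ((x : ℝ) + 1) := by
    intro x
    have hx0 : (0 : ℝ) ≤ (x : ℝ) := Nat.cast_nonneg x
    have hmul : 0 ≤ Sr * (x : ℝ) := mul_nonneg hSr0.le hx0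
    have hexp : (Sr + 1) * ((x : ℝ) + 1) = Sr * (x : ℝ) + Sr + (x : ℝ) + 1 := by ring
    rw [abs_le, hexp]
    constructor <;> linarith
  have hterm : ∀ x : ℕ, |(x : ℝ) - m| ^ (r + 1) * w x ≤ (Sr + 1) ^ (r + 1) * s x := by
    intro x
    have h1 : |(x : ℝ) - m| ^ (r + 1) ≤ (Sr + 1) ^ (r + 1) * ((x : ℝ) + 1) ^ (r + 1) := by
      rw [← mul_pow]
      exact pow_le_pow_left₀ (abs_nonneg _) (habs x) _
    calc |(x : ℝ) - m| ^ (r + 1) * w x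
        ≤ ((Sr + 1) ^ (r + 1) * ((x : ℝ) + 1) ^ (r + 1)) * a x :=
          mul_le_mul h1 (hwa x) (hwpos x).le
            (mul_nonneg (pow_nonneg (by linarith) _) (pow_nonneg (by positivity) _))
      _ = (Sr + 1) ^ (r + 1) * s x := by rw [hs]; ring
  have hNsum : Summable fun x : ℕ => |(x : ℝ) - m| ^ (r + 1) * w x :=
    Summable.of_nonneg_of_le
      (fun x => mul_nonneg (pow_nonneg (abs_nonneg _) _) (hwpos x).le) hterm (hss.mul_left _)
  have hN0 : 0 ≤ N := by
    rw [hN]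
    exact tsum_nonneg fun x => mul_nonneg (pow_nonneg (abs_nonneg _) _) (hwpos x).le
  have hNlow0 : m ^ (r + 1) ≤ N := by
    rw [hN]
    have h := Summable.le_tsum hNsum 0
      (fun j _ => mul_nonneg (pow_nonneg (abs_nonneg _) _) (hwpos j).le)
    simpa [hw0, abs_of_nonneg hm0] using h
  have hNlow1 : |1 - m| ^ (r + 1) * t ≤ N := by
    rw [hN]
    have h := Summable.le_tsum hNsum 1
      (fun j _ => mul_nonneg (pow_nonneg (abs_nonneg _) _) (hwpos j).le)
    rw [hw1] at h
    simpa using h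
  have hNup : N ≤ C2 * t := by
    rw [hN, Summable.tsum_eq_zero_add hNsum]
    have hhead : |((0 : ℕ) : ℝ) - m| ^ (r + 1) * w 0 ≤ Sr ^ r * C1 * t := by
      rw [hw0, mul_one]
      have h0 : |((0 : ℕ) : ℝ) - m| = m := by
        simp [abs_of_nonneg hm0]
      rw [h0, pow_succ]
      calc m ^ r * m ≤ Sr ^ r * (t * C1) :=
            mul_le_mul (pow_le_pow_left₀ hm0 hmB r) hm_up hm0 (pow_nonneg hSr0.le r)
        _ = Sr ^ r * C1 * t := by ring
    have htail : (∑' n : ℕ, |((n + 1 : ℕ) : ℝ) - m| ^ (r + 1) * w (n + 1)) ≤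
        (Sr + 1) ^ (r + 1) * ((R 1 / A) * Ss) * t := by
      have hb : ∀ n : ℕ, |((n + 1 : ℕ) : ℝ) - m| ^ (r + 1) * w (n + 1) ≤
          ((Sr + 1) ^ (r + 1) * (R 1 / A) * t) * s (n + 1) := by
        intro n
        have h1 : |((n + 1 : ℕ) : ℝ) - m| ^ (r + 1) ≤
            (Sr + 1) ^ (r + 1) * (((n + 1 : ℕ) : ℝ) + 1) ^ (r + 1) := by
          rw [← mul_pow]
          exact pow_le_pow_left₀ (abs_nonneg _) (habs (n + 1)) _
        calc |((n + 1 : ℕ) : ℝ) - m| ^ (r + 1) * w (n + 1)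
            ≤ ((Sr + 1) ^ (r + 1) * (((n + 1 : ℕ) : ℝ) + 1) ^ (r + 1)) *
                (t * ((R 1 / A) * a (n + 1))) :=
              mul_le_mul h1 (hwt n) (hwpos _).le
                (mul_nonneg (pow_nonneg (by linarith [hSr0]) _)
                  (pow_nonneg (by positivity) _))
          _ = ((Sr + 1) ^ (r + 1) * (R 1 / A) * t) *
                ((((n + 1 : ℕ) : ℝ) + 1) ^ (r + 1) * a (n + 1)) := by ring
          _ = ((Sr + 1) ^ (r + 1) * (R 1 / A) * t) * s (n + 1) := by rw [hs]
      have hsum1 : Summable fun n : ℕ => |((n + 1 : ℕ) : ℝ) - m| ^ (r + 1) * w (n + 1) :=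
        (summable_nat_add_iff 1).2 hNsum
      have hsum2 : Summable fun n : ℕ => ((Sr + 1) ^ (r + 1) * (R 1 / A) * t) * s (n + 1) :=
        ((summable_nat_add_iff 1).2 hss).mul_left _
      have hshift : (∑' n : ℕ, s (n + 1)) ≤ Ss := by
        rw [hSs, Summable.tsum_eq_zero_add hss]
        have := (hspos 0).le
        linarith
      have hcoef : 0 ≤ (Sr + 1) ^ (r + 1) * (R 1 / A) * t :=
        mul_nonneg (mul_nonneg (pow_nonneg (by linarith [hSr0]) _)
          (div_nonneg (hRpos 1 le_rfl).le hA0.le)) ht0.le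
      calc (∑' n : ℕ, |((n + 1 : ℕ) : ℝ) - m| ^ (r + 1) * w (n + 1))
          ≤ ∑' n : ℕ, ((Sr + 1) ^ (r + 1) * (R 1 / A) * t) * s (n + 1) :=
            Summable.tsum_le_tsum hb hsum1 hsum2
        _ = ((Sr + 1) ^ (r + 1) * (R 1 / A) * t) * ∑' n : ℕ, s (n + 1) := tsum_mul_left
        _ ≤ ((Sr + 1) ^ (r + 1) * (R 1 / A) * t) * Ss :=
            mul_le_mul_of_nonneg_left hshift hcoef
        _ = (Sr + 1) ^ (r + 1) * ((R 1 / A) * Ss) * t := by ring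
    calc |((0 : ℕ) : ℝ) - m| ^ (r + 1) * w 0 +
          ∑' n : ℕ, |((n + 1 : ℕ) : ℝ) - m| ^ (r + 1) * w (n + 1)
        ≤ Sr ^ r * C1 * t + (Sr + 1) ^ (r + 1) * ((R 1 / A) * Ss) * t :=
          add_le_add hhead htail
      _ = C2 * t := by rw [hC2]; ring
  have hNlow : (1 / 2 : ℝ) ^ (r + 1) * (t / Sa) ≤ N := by
    by_cases hm2 : (1 / 2 : ℝ) ≤ m
    · have h1 : (1 / 2 : ℝ) ^ r ≤ m ^ r := pow_le_pow_left₀ (by norm_num) hm2 r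
      have ht' : 0 ≤ t / Sa := div_nonneg ht0.le hSa0.le
      have h2 : (1 / 2 : ℝ) * (t / Sa) ≤ m := by
        have := hm_low; linarith
      calc (1 / 2 : ℝ) ^ (r + 1) * (t / Sa)
          = (1 / 2 : ℝ) ^ r * ((1 / 2) * (t / Sa)) := by rw [pow_succ]; ring
        _ ≤ m ^ r * m := mul_le_mul h1 h2 (by positivity) (pow_nonneg hm0 r)
        _ = m ^ (r + 1) := (pow_succ m r).symm
        _ ≤ N := hNlow0
    · push_neg at hm2
      have h1 : (1 / 2 : ℝ) ≤ |1 - m| := by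
        rw [abs_of_nonneg (by linarith)]; linarith
      have h2 : (1 / 2 : ℝ) ^ (r + 1) ≤ |1 - m| ^ (r + 1) :=
        pow_le_pow_left₀ (by norm_num) h1 _
      have h3 : t / Sa ≤ t := div_le_self ht0.le hSa1
      calc (1 / 2 : ℝ) ^ (r + 1) * (t / Sa) ≤ |1 - m| ^ (r + 1) * t :=
            mul_le_mul h2 h3 (div_nonneg ht0.le hSa0.le) (pow_nonneg (abs_nonneg _) _)
        _ ≤ N := hNlow1
  have goal2a : c * t ≤ psAbsCMom μs z (r + 1) := by
    rw [hMeq]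
    have h1 : ((1 / 2 : ℝ) ^ (r + 1) * (t / Sa)) / Sa ≤ N / F :=
      div_le_div₀ hN0 hNlow hfpos hfSa
    have hceq : ((1 / 2 : ℝ) ^ (r + 1) * (t / Sa)) / Sa
        = ((1 / 2 : ℝ) ^ (r + 1) / Sa ^ 2) * t := by
      have hSane : Sa ≠ 0 := hSa0.ne'
      rw [sq]
      field_simp
    have h2 : c * t ≤ ((1 / 2 : ℝ) ^ (r + 1) * (t / Sa)) / Sa := by
      rw [hceq]
      have hc2 : c ≤ (1 / 2 : ℝ) ^ (r + 1) / Sa ^ 2 := by rw [hc]; exact min_le_right _ _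
      exact mul_le_mul_of_nonneg_right hc2 ht0.le
    linarith
  have goal2b : psAbsCMom μs z (r + 1) ≤ C * t := by
    rw [hMeq]
    have hC2C : C2 ≤ C := by rw [hC]; exact le_trans (le_max_right _ _) (le_max_right _ _)
    calc N / F ≤ N := div_le_self hN0 hf1
      _ ≤ C2 * t := hNup
      _ ≤ C * t := mul_le_mul_of_nonneg_right hC2C ht0.le
  exact ⟨⟨goal1a, goal1b⟩, ⟨goal2a, goal2b⟩⟩
end

section
/- For every z ∈ ℂ with 0 < |z| < 1 and every s ∈ ℂ with Re(s) < 0, Σ_{q≥1} z^q·q^{−s} = Γ(1 − s)·Σ_{n∈ℤ} (−Log z + 2πin)^{s−1}, where Log is the principal branch of the logarithm, the complex powers (−Log z + 2πin)^{s−1} are taken with the principal branch (note Re(−Log z) > 0, so −Log z + 2πin avoids the cut), and the series over n ∈ ℤ converges absolutely. -/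
open Complex

open MeasureTheory Set Filter Asymptotics

lemma intOn {s : ℂ} (hs : s.re < 0) {c : ℂ} (hc : 0 < c.re) (k : ℕ) :
    IntegrableOn (fun x : ℝ => (x : ℝ) ^ k • ((x : ℂ) ^ (-s) * Complex.exp (-(c * x)))) (Set.Ioi 0) := by
  have hint : IntegrableOn (fun x : ℝ => x ^ ((k : ℝ) - s.re) * Real.exp (-c.re * x)) (Set.Ioi 0) := by
    have := integrableOn_rpow_mul_exp_neg_mul_rpow (p := 1) (s := (k : ℝ) - s.re) (b := c.re)
      (by have hk : (0:ℝ) ≤ (k:ℝ) := Nat.cast_nonneg k; linarith) one_pos hc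
    simpa [Real.rpow_one] using this
  refine Integrable.mono' hint ?_ ?_
  · refine (ContinuousOn.aestronglyMeasurable ?_ measurableSet_Ioi)
    refine ContinuousOn.smul (by fun_prop : ContinuousOn (fun x : ℝ => (x:ℝ) ^ k) (Set.Ioi 0)) (ContinuousOn.mul ?_ (by fun_prop : ContinuousOn (fun x : ℝ => Complex.exp (-(c * x))) (Set.Ioi 0)))
    intro x hx
    exact (Complex.continuousAt_ofReal_cpow_const x (-s) (Or.inr (ne_of_gt hx))).continuousWithinAt
  · filter_upwards [self_mem_ae_restrict measurableSet_Ioi] with x hx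
    have hx0 : 0 < x := hx
    rw [norm_smul, norm_mul,
      Complex.norm_cpow_eq_rpow_re_of_pos hx0, Complex.norm_exp]
    have : ‖(x : ℝ) ^ k‖ = x ^ (k : ℝ) := by
      rw [Real.norm_eq_abs, _root_.abs_of_nonneg (by positivity), ← Real.rpow_natCast]
    rw [this]
    have : x ^ ((k : ℝ) - s.re) = x ^ (k : ℝ) * x ^ (-s).re := by
      rw [← Real.rpow_add hx0, Complex.neg_re]; ring_nf
    rw [this]
    have : (-(c * x)).re = -c.re * x := by simp
    rw [this, mul_assoc]

lemma contOn (s w : ℂ) :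
    ContinuousOn (fun x : ℝ => (x : ℂ) ^ (-s) * Complex.exp (-(w * x))) (Set.Ioi 0) := by
  refine ContinuousOn.mul ?_ (by fun_prop)
  intro x hx
  exact (Complex.continuousAt_ofReal_cpow_const x (-s) (Or.inr (ne_of_gt hx))).continuousWithinAt

lemma key_integral {s : ℂ} (hs : s.re < 0) {c : ℂ} (hc : 0 < c.re) :
    ∫ x : ℝ in Set.Ioi 0, (x : ℂ) ^ (-s) * Complex.exp (-(c * x))
      = Complex.Gamma (1 - s) * c ^ (s - 1) := by
  set U : Set ℂ := {w : ℂ | 0 < w.re} with hU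
  have hUopen : IsOpen U := isOpen_lt continuous_const Complex.continuous_re
  have hUconn : IsPreconnected U := (convex_halfSpace_re_gt 0).isPreconnected
  set F : ℂ → ℂ := fun w => ∫ x : ℝ in Set.Ioi 0, (x : ℂ) ^ (-s) * Complex.exp (-(w * x)) with hF
  set G : ℂ → ℂ := fun w => Complex.Gamma (1 - s) * w ^ (s - 1) with hG
  -- F has a derivative at every point of U
  have hFderiv : ∀ w ∈ U, HasDerivAt F
      (∫ x : ℝ in Set.Ioi 0, -(x : ℂ) * ((x : ℂ) ^ (-s) * Complex.exp (-(w * x)))) w := by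
    intro w hw
    have hwre : 0 < w.re := hw
    set ε : ℝ := w.re / 2 with hε
    have hεpos : 0 < ε := by positivity
    have hb : IntegrableOn (fun x : ℝ => x ^ ((1 : ℝ) - s.re) * Real.exp (-ε * x)) (Set.Ioi 0) := by
      have := integrableOn_rpow_mul_exp_neg_mul_rpow (p := 1) (s := (1 : ℝ) - s.re) (b := ε)
        (by linarith) one_pos hεpos
      simpa [Real.rpow_one] using this
    have key := hasDerivAt_integral_of_dominated_loc_of_deriv_le (μ := volume.restrict (Set.Ioi 0))
      (F := fun (w : ℂ) (x : ℝ) => (x : ℂ) ^ (-s) * Complex.exp (-(w * x)))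
      (F' := fun (w : ℂ) (x : ℝ) => -(x : ℂ) * ((x : ℂ) ^ (-s) * Complex.exp (-(w * x))))
      (x₀ := w) (bound := fun x : ℝ => x ^ ((1 : ℝ) - s.re) * Real.exp (-ε * x))
      (Metric.ball_mem_nhds w hεpos) ?_ ?_ ?_ ?_ hb ?_
    · exact key.2
    · filter_upwards with w'
      exact ((contOn s w').aestronglyMeasurable measurableSet_Ioi)
    · exact (by simpa using intOn hs hwre 0 : IntegrableOn (fun x : ℝ => (x : ℂ) ^ (-s) * Complex.exp (-(w * x))) (Set.Ioi 0))
    · refine ContinuousOn.aestronglyMeasurable ?_ measurableSet_Ioi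
      exact (Complex.continuous_ofReal.neg.continuousOn).mul (contOn s w)
    · filter_upwards [self_mem_ae_restrict measurableSet_Ioi] with x hx w' hw'
      have hx0 : 0 < x := hx
      have hre : ε ≤ w'.re := by
        have h := Complex.abs_re_le_norm (w' - w)
        have hlt : ‖w' - w‖ < ε := by
          simpa [Complex.dist_eq] using Metric.mem_ball.mp hw'
        have := abs_le.mp (le_of_lt (lt_of_le_of_lt h hlt))
        simp only [Complex.sub_re] at this
        linarith [this.1]
      rw [norm_mul, norm_mul,
        Complex.norm_cpow_eq_rpow_re_of_pos hx0, Complex.norm_exp]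
      have h1 : ‖(-(x : ℂ))‖ = x := by
        rw [norm_neg, Complex.norm_real, Real.norm_eq_abs, _root_.abs_of_nonneg hx0.le]
      have h3 : (-(w' * x)).re = -w'.re * x := by simp
      rw [h1, h3, Complex.neg_re]
      have h2 : x ^ ((1:ℝ) - s.re) = x * x ^ (-s.re) := by
        rw [show (1:ℝ) - s.re = 1 + -s.re by ring, Real.rpow_add hx0, Real.rpow_one]
      have hxp : (0:ℝ) ≤ x ^ (-s.re) := Real.rpow_nonneg hx0.le _
      have hee : Real.exp (-w'.re * x) ≤ Real.exp (-ε * x) :=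
        Real.exp_le_exp.mpr (by nlinarith)
      calc x * (x ^ (-s.re) * Real.exp (-w'.re * x))
          ≤ x * (x ^ (-s.re) * Real.exp (-ε * x)) := by
            exact mul_le_mul_of_nonneg_left (mul_le_mul_of_nonneg_left hee hxp) hx0.le
        _ = x ^ ((1:ℝ) - s.re) * Real.exp (-ε * x) := by rw [h2]; ring
    · filter_upwards [self_mem_ae_restrict measurableSet_Ioi] with x hx w' hw'
      have h : HasDerivAt (fun w'' : ℂ => -(w'' * (x : ℂ))) (-(x : ℂ)) w' := by
        exact (hasDerivAt_mul_const (x : ℂ)).neg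
      have h' := (h.cexp).const_mul ((x : ℂ) ^ (-s))
      exact h'.congr_deriv (by ring)
  -- analyticity
  have hFan : AnalyticOnNhd ℂ F U :=
    DifferentiableOn.analyticOnNhd
      (fun w hw => ((hFderiv w hw).differentiableAt.differentiableWithinAt)) hUopen
  have hGan : AnalyticOnNhd ℂ G U := by
    refine DifferentiableOn.analyticOnNhd ?_ hUopen
    intro w hw
    refine (DifferentiableAt.const_mul ?_ _).differentiableWithinAt
    exact differentiableAt_id.cpow (differentiableAt_const _) (by
      simp only [id_eq]
      exact Complex.mem_slitPlane_iff.mpr (Or.inl hw))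
  have hreal : ∀ r : ℝ, 0 < r → F (r : ℂ) = G (r : ℂ) := by
    intro r hr
    have h1 : 0 < (1 - s).re := by
      simp only [Complex.sub_re, Complex.one_re]; linarith
    have h2 := integral_cpow_mul_exp_neg_mul_Ioi h1 hr
    have h3 : (1 - s) - 1 = -s := by ring
    rw [h3] at h2
    rw [hF, hG]
    simp only
    rw [h2, one_div, Complex.inv_cpow _ _ (by
        rw [Complex.arg_ofReal_of_nonneg hr.le]
        exact Real.pi_ne_zero.symm),
      ← Complex.cpow_neg, neg_sub, mul_comm]
  have hEq : Set.EqOn F G U := by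
    refine hFan.eqOn_of_preconnected_of_frequently_eq hGan hUconn (z₀ := (1 : ℂ))
      (by simp [hU]) ?_
    have htends : Filter.Tendsto (fun n : ℕ => ((1 + 1 / (n + 1) : ℝ) : ℂ)) Filter.atTop
        (nhdsWithin (1 : ℂ) {(1 : ℂ)}ᶜ) := by
      rw [tendsto_nhdsWithin_iff]
      constructor
      · have hr : Filter.Tendsto (fun n : ℕ => (1 + 1 / (n + 1) : ℝ)) Filter.atTop (nhds 1) := by
          have := tendsto_one_div_add_atTop_nhds_zero_nat (𝕜 := ℝ)
          simpa using tendsto_const_nhds.add this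
        have h := (Complex.continuous_ofReal.tendsto 1).comp hr
        simp only [Function.comp_def] at h
        simpa using h
      · filter_upwards with n
        simp only [Set.mem_compl_iff, Set.mem_singleton_iff]
        intro hcontra
        have : (1 + 1 / (n + 1) : ℝ) = 1 := by exact_mod_cast hcontra
        have hpos : 0 < 1 / ((n : ℝ) + 1) := by positivity
        linarith
    refine htends.frequently (Filter.Frequently.of_forall ?_)
    intro n
    exact hreal _ (by positivity)
  exact hEq hc

lemma cpow_abs_le (c : ℂ) (hc : c ≠ 0) (t : ℂ) :
    ‖c ^ t‖ ≤ ‖c‖ ^ t.re * Real.exp (Real.pi * |t.im|) := by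
  rw [Complex.norm_cpow_of_ne_zero hc, div_le_iff₀ (Real.exp_pos _), mul_assoc, ← Real.exp_add]
  have h1 : (0:ℝ) ≤ Real.pi * |t.im| + c.arg * t.im := by
    have h2 : |c.arg * t.im| ≤ Real.pi * |t.im| := by
      rw [abs_mul]
      exact mul_le_mul_of_nonneg_right (Complex.abs_arg_le_pi c) (abs_nonneg _)
    have := neg_abs_le (c.arg * t.im)
    linarith [abs_le.mp h2]
  have h3 : (1:ℝ) ≤ Real.exp (Real.pi * |t.im| + c.arg * t.im) := by
    rw [← Real.exp_zero]
    exact Real.exp_le_exp.mpr h1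
  nlinarith [Real.rpow_nonneg (norm_nonneg c) t.re]

theorem stmt18 (z : ℂ) (hz0 : z ≠ 0) (hz : ‖z‖ < 1)
    (s : ℂ) (hs : s.re < 0) :
    Summable (fun n : ℤ =>
      ‖(-Complex.log z + 2 * Real.pi * (n : ℂ) * Complex.I) ^ (s - 1)‖) ∧
    ∑' q : ℕ, z ^ (q + 1) * (((q + 1 : ℕ) : ℂ)) ^ (-s)
      = Complex.Gamma (1 - s) *
          ∑' n : ℤ, (-Complex.log z + 2 * Real.pi * (n : ℂ) * Complex.I) ^ (s - 1) := by
  set w : ℂ := -Complex.log z with hwdef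
  have hw : 0 < w.re := by
    rw [hwdef, Complex.neg_re, Complex.log_re]
    have : 0 < ‖z‖ := norm_pos_iff.mpr hz0
    simpa using Real.log_neg this hz
  set f : ℝ → ℂ := fun x => if 0 < x then (x : ℂ) ^ (-s) * Complex.exp (-(w * x)) else 0 with hfdef
  set g : ℝ → ℂ := fun x => (x : ℂ) ^ (-s) * Complex.exp (-(w * x)) with hgdef
  have hsne : -s ≠ 0 := by
    intro h
    rw [neg_eq_zero] at h
    rw [h] at hs
    simp at hs
  have hg0 : g 0 = 0 := by
    simp [hgdef, Complex.zero_cpow hsne]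
  have hgcont : Continuous g := by
    rw [continuous_iff_continuousAt]
    intro x
    refine ContinuousAt.mul ?_ (by fun_prop)
    exact Complex.continuousAt_ofReal_cpow_const x (-s)
      (Or.inl (by simp only [Complex.neg_re]; linarith))
  have hfg : ∀ x : ℝ, 0 < x → f x = g x := fun x hx => if_pos hx
  have hfnorm : ∀ x : ℝ, ‖f x‖ ≤ ‖g x‖ := by
    intro x
    by_cases h : 0 < x
    · rw [hfg x h]
    · simp only [hfdef, if_neg h]
      simp
  have hfcont : Continuous f := by
    rw [continuous_iff_continuousAt]
    intro x
    rcases lt_trichotomy x 0 with h | h | h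
    · have hev : ∀ᶠ y in nhds x, f y = 0 := by
        filter_upwards [Iio_mem_nhds h] with y hy
        exact if_neg (by exact not_lt.mpr (le_of_lt hy))
      exact ContinuousAt.congr (continuousAt_const (y := (0:ℂ))) (hev.mono fun y hy => hy.symm)
    · subst h
      have hf0 : f 0 = 0 := if_neg (lt_irrefl 0)
      rw [ContinuousAt, hf0]
      have hgt : Filter.Tendsto (fun y => ‖g y‖) (nhds 0) (nhds 0) := by
        have := (hgcont.tendsto 0).norm
        rwa [hg0, norm_zero] at this
      exact squeeze_zero_norm hfnorm hgt
    · have hev : ∀ᶠ y in nhds x, g y = f y := by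
        filter_upwards [Ioi_mem_nhds h] with y hy
        exact (hfg y hy).symm
      exact (hgcont.continuousAt).congr hev
  -- decay parameters
  set b : ℝ := min 2 (1 - s.re) with hbdef
  have hb : 1 < b := lt_min (by norm_num) (by linarith)
  have hble : b ≤ 1 - s.re := min_le_right _ _
  -- decay of f
  have hfO : f =O[Filter.cocompact ℝ] (fun x : ℝ => |x| ^ (-b)) := by
    rw [cocompact_eq_atBot_atTop, Asymptotics.isBigO_sup]
    constructor
    · refine Asymptotics.isBigO_iff.mpr ⟨0, ?_⟩
      filter_upwards [Filter.eventually_lt_atBot (0 : ℝ)] with x hx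
      have : f x = 0 := if_neg (not_lt.mpr hx.le)
      simp [this]
    · refine Asymptotics.isBigO_iff.mpr ⟨1, ?_⟩
      have hA := tendsto_rpow_mul_exp_neg_mul_atTop_nhds_zero (b - s.re) w.re hw
      have hA' : ∀ᶠ x : ℝ in Filter.atTop, x ^ (b - s.re) * Real.exp (-w.re * x) ≤ 1 :=
        hA.eventually_le_const (by norm_num)
      filter_upwards [hA', Filter.eventually_ge_atTop (1 : ℝ)] with x hx1 hx2
      have hx0 : 0 < x := lt_of_lt_of_le one_pos hx2
      have hfx : ‖f x‖ = x ^ (-s.re) * Real.exp (-w.re * x) := by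
        rw [hfg x hx0, hgdef]
        simp only [norm_mul, Complex.norm_cpow_eq_rpow_re_of_pos hx0,
          Complex.norm_exp, Complex.neg_re, Complex.mul_re, Complex.ofReal_re, Complex.ofReal_im,
          mul_zero, sub_zero]
        ring_nf
      rw [hfx, one_mul]
      have hgx : ‖|x| ^ (-b)‖ = x ^ (-b) := by
        rw [Real.norm_eq_abs, _root_.abs_of_nonneg (Real.rpow_nonneg (abs_nonneg x) _),
          _root_.abs_of_nonneg hx0.le]
      rw [hgx]
      have hsplit : x ^ (-s.re) = x ^ (-b) * x ^ (b - s.re) := by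
        rw [← Real.rpow_add hx0]; ring_nf
      rw [hsplit, mul_assoc]
      have h1 : (0:ℝ) ≤ x ^ (-b) := Real.rpow_nonneg hx0.le _
      nlinarith [mul_nonneg (Real.rpow_nonneg hx0.le (b - s.re)) (Real.exp_pos (-w.re * x)).le]
  -- Fourier transform of f
  have hFT : ∀ ξ : ℝ, FourierTransform.fourier f ξ
      = Complex.Gamma (1 - s) * (w + 2 * (Real.pi : ℂ) * (ξ : ℂ) * Complex.I) ^ (s - 1) := by
    intro ξ
    have hc : 0 < (w + 2 * (Real.pi : ℂ) * (ξ : ℂ) * Complex.I).re := by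
      simpa using hw
    rw [Real.fourier_real_eq_integral_exp_smul]
    have h0 : ∀ x : ℝ, x ∉ Set.Ioi (0:ℝ) →
        Complex.exp (((-2 * Real.pi * x * ξ : ℝ) : ℂ) * Complex.I) • f x = 0 := by
      intro x hx
      have : f x = 0 := if_neg (by simpa using hx)
      simp [this]
    rw [← MeasureTheory.setIntegral_eq_integral_of_forall_compl_eq_zero h0,
      ← key_integral hs hc]
    refine MeasureTheory.setIntegral_congr_fun measurableSet_Ioi ?_
    intro x hx
    simp only [smul_eq_mul]
    rw [hfg x hx, hgdef]
    simp only
    rw [mul_comm (Complex.exp _) _, mul_assoc, ← Complex.exp_add]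
    congr 1
    push_cast
    ring
  -- decay of the Fourier transform
  set C : ℝ := ‖Complex.Gamma (1 - s)‖ * Real.exp (Real.pi * |(s - 1).im|) with hCdef
  have hkey : ∀ ξ : ℝ, max 1 (‖w‖) ≤ |ξ| →
      ‖FourierTransform.fourier f ξ‖ ≤ C * ‖|ξ| ^ (-b)‖ := by
    intro ξ hξ
    have hξ1 : (1:ℝ) ≤ |ξ| := le_trans (le_max_left _ _) hξ
    have hξw : ‖w‖ ≤ |ξ| := le_trans (le_max_right _ _) hξ
    have hξ0 : 0 < |ξ| := lt_of_lt_of_le one_pos hξ1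
    set c : ℂ := w + 2 * (Real.pi : ℂ) * (ξ : ℂ) * Complex.I with hcdef
    have habs : |ξ| ≤ ‖c‖ := by
      have h1 : ‖2 * (Real.pi : ℂ) * (ξ : ℂ) * Complex.I‖ = 2 * Real.pi * |ξ| := by
        simp [abs_of_pos Real.pi_pos]
      have h2 : ‖2 * (Real.pi : ℂ) * (ξ : ℂ) * Complex.I‖
          ≤ ‖c‖ + ‖w‖ := by
        calc ‖2 * (Real.pi : ℂ) * (ξ : ℂ) * Complex.I‖
            = ‖c - w‖ := by rw [hcdef]; ring_nf
          _ ≤ ‖c‖ + ‖w‖ := by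
              calc ‖c - w‖ ≤ ‖c‖ + ‖-w‖ := by
                    simpa [sub_eq_add_neg] using norm_add_le c (-w)
                _ = ‖c‖ + ‖w‖ := by rw [norm_neg]
      rw [h1] at h2
      nlinarith [Real.pi_gt_three]
    have hc0 : c ≠ 0 := by
      intro h
      rw [h, norm_zero] at habs
      exact lt_irrefl (0:ℝ) (lt_of_lt_of_le hξ0 habs)
    rw [hFT ξ]
    rw [norm_mul]
    have hcp := cpow_abs_le c hc0 (s - 1)
    have hmono1 : ‖c‖ ^ (s - 1).re ≤ |ξ| ^ (s - 1).re :=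
      Real.rpow_le_rpow_of_nonpos hξ0 habs (by simp only [Complex.sub_re, Complex.one_re]; linarith)
    have hmono2 : |ξ| ^ (s - 1).re ≤ |ξ| ^ (-b) :=
      Real.rpow_le_rpow_of_exponent_le hξ1 (by simp only [Complex.sub_re, Complex.one_re]; linarith)
    have hnorm : ‖|ξ| ^ (-b)‖ = |ξ| ^ (-b) := by
      rw [Real.norm_eq_abs, _root_.abs_of_nonneg (Real.rpow_nonneg (abs_nonneg ξ) _)]
    rw [hnorm, hCdef]
    have hexp : (0:ℝ) < Real.exp (Real.pi * |(s - 1).im|) := Real.exp_pos _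
    calc ‖Complex.Gamma (1 - s)‖ * ‖c ^ (s - 1)‖
        ≤ ‖Complex.Gamma (1 - s)‖ *
            (‖c‖ ^ (s - 1).re * Real.exp (Real.pi * |(s - 1).im|)) :=
          mul_le_mul_of_nonneg_left hcp (norm_nonneg _)
      _ ≤ ‖Complex.Gamma (1 - s)‖ *
            (|ξ| ^ (-b) * Real.exp (Real.pi * |(s - 1).im|)) := by
          refine mul_le_mul_of_nonneg_left ?_ (norm_nonneg _)
          exact mul_le_mul_of_nonneg_right (le_trans hmono1 hmono2) hexp.le
      _ = ‖Complex.Gamma (1 - s)‖ * Real.exp (Real.pi * |(s - 1).im|) *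
            |ξ| ^ (-b) := by ring
  have hFfO : FourierTransform.fourier f =O[Filter.cocompact ℝ] (fun x : ℝ => |x| ^ (-b)) := by
    rw [cocompact_eq_atBot_atTop, Asymptotics.isBigO_sup]
    constructor
    · refine Asymptotics.isBigO_iff.mpr ⟨C, ?_⟩
      filter_upwards [Filter.eventually_le_atBot (-(max 1 (‖w‖)))] with ξ hξ
      refine hkey ξ ?_
      rw [abs_of_nonpos (by
        have : (0:ℝ) < max 1 (‖w‖) := lt_of_lt_of_le one_pos (le_max_left _ _)
        linarith)]
      linarith
    · refine Asymptotics.isBigO_iff.mpr ⟨C, ?_⟩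
      filter_upwards [Filter.eventually_ge_atTop (max 1 (‖w‖))] with ξ hξ
      refine hkey ξ ?_
      rw [_root_.abs_of_nonneg (le_trans (le_trans zero_le_one (le_max_left _ _)) hξ)]
      exact hξ
  -- cast identity
  have hc_eq : ∀ n : ℤ, w + 2 * (Real.pi : ℂ) * (((n : ℝ) : ℂ)) * Complex.I
      = -Complex.log z + 2 * Real.pi * (n : ℂ) * Complex.I := by
    intro n
    rw [hwdef]
    push_cast
    ring
  have hΓ : Complex.Gamma (1 - s) ≠ 0 := by
    refine Complex.Gamma_ne_zero_of_re_pos ?_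
    simp only [Complex.sub_re, Complex.one_re]
    linarith
  -- summability of the Fourier coefficients
  have hsumF : Summable (fun n : ℤ => FourierTransform.fourier f n) :=
    summable_of_isBigO (Real.summable_abs_int_rpow hb)
      (hFfO.comp_tendsto Int.tendsto_coe_cofinite)
  have hsumnorm : Summable (fun n : ℤ => ‖FourierTransform.fourier f n‖) :=
    summable_norm_iff.mpr hsumF
  have hsum1 : Summable (fun n : ℤ =>
      ‖(-Complex.log z + 2 * Real.pi * (n : ℂ) * Complex.I) ^ (s - 1)‖) := by
    have h2 : ∀ n : ℤ, ‖FourierTransform.fourier f n‖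
        = ‖Complex.Gamma (1 - s)‖ *
          ‖(-Complex.log z + 2 * Real.pi * (n : ℂ) * Complex.I) ^ (s - 1)‖ := by
      intro n
      rw [hFT, hc_eq n, norm_mul]
    have h3 := (hsumnorm.congr h2).mul_left (‖Complex.Gamma (1 - s)‖)⁻¹
    have h4 : (‖Complex.Gamma (1 - s)‖)⁻¹ * ‖Complex.Gamma (1 - s)‖ = 1 :=
      inv_mul_cancel₀ (by simpa using hΓ)
    refine h3.congr ?_
    intro n
    rw [← mul_assoc, h4, one_mul]
  refine ⟨hsum1, ?_⟩
  -- Poisson summation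
  have hpoisson := Real.tsum_eq_tsum_fourier_of_rpow_decay hfcont hb hfO hFfO 0
  simp only [zero_add, QuotientAddGroup.mk_zero, fourier_eval_zero, mul_one] at hpoisson
  -- left-hand side
  have hinj : Function.Injective (fun q : ℕ => (q : ℤ) + 1) := by
    intro a b h
    simpa using h
  have hsupp : Function.support (fun n : ℤ => f n) ⊆ Set.range (fun q : ℕ => (q : ℤ) + 1) := by
    intro n hn
    rcases le_or_gt n 0 with h | h
    · exfalso
      apply hn
      have : ¬ (0:ℝ) < (n : ℝ) := by
        push_neg
        exact_mod_cast h
      exact if_neg this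
    · exact ⟨(n - 1).toNat, by show ((n - 1).toNat : ℤ) + 1 = n; omega⟩
  have hreindex := hinj.tsum_eq hsupp
  have hterm : ∀ q : ℕ, f (((q : ℤ) + 1 : ℤ) : ℝ) = z ^ (q + 1) * (((q + 1 : ℕ) : ℂ)) ^ (-s) := by
    intro q
    have hq0 : (0:ℝ) < (((q : ℤ) + 1 : ℤ) : ℝ) := by positivity
    rw [hfg _ hq0, hgdef]
    simp only
    have hcast : ((((q : ℤ) + 1 : ℤ) : ℝ) : ℂ) = (((q + 1 : ℕ) : ℂ)) := by push_cast; ring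
    rw [hcast]
    have hexp : Complex.exp (-(w * ((q + 1 : ℕ) : ℂ))) = z ^ (q + 1) := by
      rw [hwdef]
      have : -(-Complex.log z * ((q + 1 : ℕ) : ℂ)) = ((q + 1 : ℕ) : ℂ) * Complex.log z := by ring
      rw [this, Complex.exp_nat_mul, Complex.exp_log hz0]
    rw [hexp, mul_comm]
  have hLHS : ∑' q : ℕ, z ^ (q + 1) * (((q + 1 : ℕ) : ℂ)) ^ (-s) = ∑' n : ℤ, f n := by
    rw [← hreindex]
    exact (tsum_congr hterm).symm
  -- right-hand side
  have hRHS : ∑' n : ℤ, FourierTransform.fourier f n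
      = Complex.Gamma (1 - s) *
        ∑' n : ℤ, (-Complex.log z + 2 * Real.pi * (n : ℂ) * Complex.I) ^ (s - 1) := by
    rw [← tsum_mul_left]
    refine tsum_congr ?_
    intro n
    rw [hFT, hc_eq n]
  rw [hLHS, hpoisson, hRHS]
end
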